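/- arXiv:0810.2327 — 7 statements merged into one kernel-verified Lean document; each statement's English description precedes it below -/
import Mathlib

section
/- For any two density operators ρ and σ on an n-dimensional complex Hilbert space, the trace norm satisfies ‖ρ − σ‖₁ ≥ 1 − n·Tr(ρσ). -/
open ComplexOrder

/-- The trace norm of a Hermitian matrix: sum of absolute values of its eigenvalues. -/
noncomputable def traceNorm {n : ℕ} {A : Matrix (Fin n) (Fin n) ℂ}
    (hA : A.IsHermitian) : ℝ :=
  ∑ i, |hA.eigenvalues i|

open Matrix in
private lemma conj_diag_eq_dot {n : ℕ} (ρ V : Matrix (Fin n) (Fin n) ℂ) (i : Fin n) :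
    (Vᴴ * ρ * V) i i = dotProduct (star (fun k => V k i)) (ρ *ᵥ (fun k => V k i)) := by
  simp only [Matrix.mul_apply, Matrix.conjTranspose_apply, dotProduct, Matrix.mulVec,
    Pi.star_apply, Finset.sum_mul, Finset.mul_sum]
  rw [Finset.sum_comm]
  congr 1; ext l; congr 1; ext k; ring

private lemma abs_sub_eq_min (a b : ℝ) : |a - b| = a + b - 2 * min a b := by
  rcases le_total a b with h | h
  · rw [abs_of_nonpos (by linarith), min_eq_left h]; ring
  · rw [abs_of_nonneg (by linarith), min_eq_right h]; ring

open Matrix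

/-- For density operators `ρ, σ` on an `n`-dimensional Hilbert space,
`‖ρ − σ‖₁ ≥ 1 − n·Tr(ρσ)`. -/
theorem traceNorm_ge_one_sub_dim_mul_trace {n : ℕ}
    (ρ σ : Matrix (Fin n) (Fin n) ℂ) (hρ : ρ.PosSemidef) (hσ : σ.PosSemidef)
    (hρ1 : ρ.trace = 1) (hσ1 : σ.trace = 1) :
    traceNorm (hρ.1.sub hσ.1) ≥ 1 - (n : ℝ) * ((ρ * σ).trace).re := by
  classical
  set A := ρ - σ with hAdef
  have hA : A.IsHermitian := hρ.1.sub hσ.1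
  set s : Fin n → ℝ := hσ.1.eigenvalues with hs
  set lam : Fin n → ℝ := hA.eigenvalues with hlam
  set V : Matrix (Fin n) (Fin n) ℂ := (hσ.1.eigenvectorUnitary : Matrix (Fin n) (Fin n) ℂ) with hV
  set W : Matrix (Fin n) (Fin n) ℂ := (hA.eigenvectorUnitary : Matrix (Fin n) (Fin n) ℂ) with hW
  have hV1 : Vᴴ * V = 1 := by
    rw [← Matrix.star_eq_conjTranspose]
    exact (Matrix.mem_unitaryGroup_iff'.mp (hσ.1.eigenvectorUnitary).2)
  have hV2 : V * Vᴴ = 1 := by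
    rw [← Matrix.star_eq_conjTranspose]
    exact (Matrix.mem_unitaryGroup_iff.mp (hσ.1.eigenvectorUnitary).2)
  have hW1 : Wᴴ * W = 1 := by
    rw [← Matrix.star_eq_conjTranspose]
    exact (Matrix.mem_unitaryGroup_iff'.mp (hA.eigenvectorUnitary).2)
  have hσspec : σ = V * Matrix.diagonal (RCLike.ofReal ∘ s) * Vᴴ := by
    rw [← Matrix.star_eq_conjTranspose]; exact hσ.1.spectral_theorem
  have hAspec : A = W * Matrix.diagonal (RCLike.ofReal ∘ lam) * Wᴴ := by
    rw [← Matrix.star_eq_conjTranspose]; exact hA.spectral_theorem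
  set B : Matrix (Fin n) (Fin n) ℂ := Vᴴ * ρ * V with hB
  set p : Fin n → ℝ := fun i => (B i i).re with hp
  -- nonnegativity of diagonal entries of B
  have hBpos : ∀ i, 0 ≤ B i i := by
    intro i
    rw [hB, conj_diag_eq_dot]
    exact hρ.dotProduct_mulVec_nonneg _
  have hpnn : ∀ i, 0 ≤ p i := fun i => (Complex.le_def.mp (hBpos i)).1
  have hBim : ∀ i, (B i i).im = 0 := fun i => ((Complex.le_def.mp (hBpos i)).2).symm
  have hsnn : ∀ i, 0 ≤ s i := fun i => hσ.eigenvalues_nonneg i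
  -- sum of p is 1
  have hpsum : ∑ i, p i = 1 := by
    have ht : B.trace = 1 := by
      rw [hB, Matrix.trace_mul_comm, ← mul_assoc, hV2, one_mul, hρ1]
    have := congrArg Complex.re ht
    simpa [Matrix.trace, Matrix.diag, Complex.re_sum] using this
  -- sum of s is 1
  have hssum : ∑ i, s i = 1 := by
    have ht : σ.trace = ∑ i, (s i : ℂ) := by
      rw [hσspec, Matrix.trace_mul_comm, ← mul_assoc, hV1, one_mul]
      simp [Matrix.trace, Matrix.diag]
    rw [hσ1] at ht
    have := congrArg Complex.re ht.symm
    simpa [Complex.re_sum] using this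
  -- trace of ρσ
  have htrace : ((ρ * σ).trace).re = ∑ i, p i * s i := by
    have h1 : (ρ * σ).trace = (B * Matrix.diagonal (RCLike.ofReal ∘ s)).trace := by
      rw [hσspec, hB, ← mul_assoc, Matrix.trace_mul_comm, ← mul_assoc, ← mul_assoc]
    have h2 : (B * Matrix.diagonal (RCLike.ofReal ∘ s)).trace = ∑ i, B i i * (s i : ℂ) := by
      simp [Matrix.trace, Matrix.diag, Matrix.mul_diagonal]
    rw [h1, h2]
    rw [Complex.re_sum]
    congr 1; ext i
    simp [Complex.mul_re, hBim i, hp]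
  -- diagonal of conjugated σ
  have hdiagσ : Vᴴ * σ * V = Matrix.diagonal (RCLike.ofReal ∘ s) := by
    rw [hσspec, ← mul_assoc, ← mul_assoc, hV1, one_mul, mul_assoc, hV1, mul_one]
  -- p i - s i is the diagonal of conjugated A
  have hdiff : ∀ i, ((Vᴴ * A * V) i i).re = p i - s i := by
    intro i
    have : Vᴴ * A * V = B - Matrix.diagonal (RCLike.ofReal ∘ s) := by
      rw [hAdef, hB, ← hdiagσ]
      noncomm_ring
    rw [this]
    simp [Matrix.sub_apply, Matrix.diagonal_apply_eq, hp]
  -- the pinching bound : ∑ |p i - s i| ≤ traceNorm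
  set M : Matrix (Fin n) (Fin n) ℂ := Vᴴ * W with hM
  have hMcol : ∀ j, ∑ i, Complex.normSq (M i j) = 1 := by
    intro j
    have hMU : Mᴴ * M = 1 := by
      rw [hM, Matrix.conjTranspose_mul, Matrix.conjTranspose_conjTranspose,
        mul_assoc, ← mul_assoc V, hV2, one_mul, hW1]
    have h1 : (Mᴴ * M) j j = 1 := by rw [hMU]; simp
    have h2 : (Mᴴ * M) j j = ∑ i, (Complex.normSq (M i j) : ℂ) := by
      simp only [Matrix.mul_apply, Matrix.conjTranspose_apply]
      congr 1; ext i
      rw [Complex.star_def]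
      exact Complex.normSq_eq_conj_mul_self.symm
    rw [h2] at h1
    have := congrArg Complex.re h1
    simpa [Complex.re_sum] using this
  have hdiagA : ∀ i, (Vᴴ * A * V) i i = ∑ j, (lam j : ℂ) * (Complex.normSq (M i j) : ℂ) := by
    intro i
    have h1 : Vᴴ * A * V = M * Matrix.diagonal (RCLike.ofReal ∘ lam) * Mᴴ := by
      rw [hAspec, hM, Matrix.conjTranspose_mul, Matrix.conjTranspose_conjTranspose]
      noncomm_ring
    rw [h1, Matrix.mul_apply]
    congr 1; ext j
    rw [Matrix.conjTranspose_apply, Matrix.mul_diagonal]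
    have hc : ((RCLike.ofReal ∘ lam) j : ℂ) = ((lam j : ℝ) : ℂ) := rfl
    rw [hc, Complex.star_def, mul_comm (M i j), mul_assoc, Complex.mul_conj]
  have hpinch : ∑ i, |p i - s i| ≤ traceNorm hA := by
    have key : ∀ i, |p i - s i| ≤ ∑ j, |lam j| * Complex.normSq (M i j) := by
      intro i
      rw [← hdiff i, hdiagA i]
      have : (∑ j, (lam j : ℂ) * (Complex.normSq (M i j) : ℂ)).re
          = ∑ j, lam j * Complex.normSq (M i j) := by
        rw [Complex.re_sum]
        congr 1; ext j
        simp [Complex.mul_re]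
      rw [this]
      calc |∑ j, lam j * Complex.normSq (M i j)| ≤ ∑ j, |lam j * Complex.normSq (M i j)| :=
            Finset.abs_sum_le_sum_abs _ _
        _ = ∑ j, |lam j| * Complex.normSq (M i j) := by
            congr 1; ext j
            rw [abs_mul, abs_of_nonneg (Complex.normSq_nonneg _)]
    calc ∑ i, |p i - s i| ≤ ∑ i, ∑ j, |lam j| * Complex.normSq (M i j) :=
          Finset.sum_le_sum (fun i _ => key i)
      _ = ∑ j, |lam j| * ∑ i, Complex.normSq (M i j) := by
          rw [Finset.sum_comm]
          congr 1; ext j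
          rw [Finset.mul_sum]
      _ = ∑ j, |lam j| := by
          congr 1; ext j
          rw [hMcol j, mul_one]
      _ = traceNorm hA := rfl
  -- the classical inequality
  set m : Fin n → ℝ := fun i => min (p i) (s i) with hm
  have hmnn : ∀ i, 0 ≤ m i := fun i => le_min (hpnn i) (hsnn i)
  have hmsq : ∀ i, m i ^ 2 ≤ p i * s i := by
    intro i
    rcases le_total (p i) (s i) with h | h
    · rw [hm]; simp only [min_eq_left h]
      rw [sq]
      exact mul_le_mul_of_nonneg_left h (hpnn i)
    · rw [hm]; simp only [min_eq_right h]
      rw [sq]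
      exact mul_le_mul_of_nonneg_right h (hsnn i)
  have hcs : (∑ i, m i) ^ 2 ≤ (n : ℝ) * ∑ i, m i ^ 2 := by
    have := sq_sum_le_card_mul_sum_sq (s := (Finset.univ : Finset (Fin n))) (f := m)
    simpa using this
  have hmm : (∑ i, m i) ^ 2 ≤ (n : ℝ) * ∑ i, p i * s i :=
    hcs.trans (by
      apply mul_le_mul_of_nonneg_left (Finset.sum_le_sum (fun i _ => hmsq i)) (Nat.cast_nonneg n))
  have hmsum1 : ∑ i, m i ≤ 1 := by
    rw [← hpsum]
    exact Finset.sum_le_sum (fun i _ => min_le_left _ _)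
  have hmsum0 : 0 ≤ ∑ i, m i := Finset.sum_nonneg (fun i _ => hmnn i)
  have habs : ∑ i, |p i - s i| = 2 - 2 * ∑ i, m i := by
    have : ∀ i, |p i - s i| = p i + s i - 2 * m i := fun i => abs_sub_eq_min _ _
    rw [Finset.sum_congr rfl (fun i _ => this i), Finset.sum_sub_distrib,
      Finset.sum_add_distrib, hpsum, hssum, ← Finset.mul_sum]
    ring
  rw [ge_iff_le, htrace]
  have h1 : 2 - 2 * ∑ i, m i ≤ traceNorm hA := habs ▸ hpinch
  nlinarith [sq_nonneg (1 - ∑ i, m i)]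
end

section
/- Let X ~ χ²_{2a} and Y ~ χ²_{2b} be independent chi-square random variables with 2a and 2b degrees of freedom respectively (a, b positive integers). Then (1/2)·E|X/(2a) − Y/(2b)| = 1 − (1/(a+b)) · Σ_{k=0}^{a−1} Σ_{ℓ=0}^{b−1} p^k (1−p)^ℓ · C(k+ℓ, k), where p = a/(a+b). -/
open MeasureTheory ProbabilityTheory

/-- The density of the chi-square distribution with `2a` degrees of freedom. -/
noncomputable def chiSqDensity (a : ℕ) (x : ℝ) : ℝ :=
  if 0 ≤ x then x ^ (a - 1) * Real.exp (-x / 2) / (2 ^ a * (Nat.factorial (a - 1))) else 0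

open Real Set Filter Topology
open scoped NNReal ENNReal

lemma gammaInt (n : ℕ) {c : ℝ} (hc : 0 < c) :
    ∫ t in Set.Ioi (0:ℝ), t ^ n * Real.exp (-(c * t)) = n.factorial / c ^ (n + 1) := by
  have h := Real.integral_rpow_mul_exp_neg_mul_Ioi (a := (n:ℝ) + 1) (by positivity) hc
  rw [show ((n:ℝ)+1) - 1 = (n:ℝ) by ring] at h
  rw [setIntegral_congr_fun measurableSet_Ioi
    (fun t (ht : t ∈ Set.Ioi (0:ℝ)) => by rw [← Real.rpow_natCast t n]), h,
    Real.Gamma_nat_eq_factorial,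
    show ((n:ℝ)+1) = ((n+1 : ℕ) : ℝ) by push_cast; ring,
    Real.rpow_natCast, one_div, inv_pow, inv_mul_eq_div]

lemma intOn_pow_mul_exp (n : ℕ) {c : ℝ} (hc : 0 < c) :
    IntegrableOn (fun t => t ^ n * Real.exp (-(c * t))) (Set.Ioi (0:ℝ)) := by
  have h := integrableOn_rpow_mul_exp_neg_mul_rpow (s := (n:ℝ)) (p := 1) (b := c)
    (lt_of_lt_of_le neg_one_lt_zero (Nat.cast_nonneg n)) one_pos hc
  refine h.congr_fun (fun t ht => ?_) measurableSet_Ioi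
  dsimp only
  rw [Real.rpow_natCast, Real.rpow_one, neg_mul]


lemma chiSq_nonneg (a : ℕ) (x : ℝ) : 0 ≤ chiSqDensity a x := by
  unfold chiSqDensity; split
  · positivity
  · exact le_rfl

lemma chiSq_meas (a : ℕ) : Measurable (chiSqDensity a) := by
  unfold chiSqDensity
  exact Measurable.ite (measurableSet_le measurable_const measurable_id)
    (by fun_prop) measurable_const

lemma chiSq_eq (m : ℕ) {x : ℝ} (hx : 0 ≤ x) :
    chiSqDensity (m + 1) x = Real.exp (-x / 2) * (x / 2) ^ m / (2 * m.factorial) := by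
  rw [chiSqDensity, if_pos hx]
  simp only [Nat.add_sub_cancel]
  rw [div_pow, pow_succ]
  have : (m.factorial : ℝ) ≠ 0 := Nat.cast_ne_zero.2 m.factorial_ne_zero
  field_simp

lemma hasDeriv_tail (m : ℕ) (x : ℝ) :
    HasDerivAt (fun s => Real.exp (-s / 2) * ∑ k ∈ Finset.range (m + 1), (s / 2) ^ k / k.factorial)
      (-(Real.exp (-x / 2) * (x / 2) ^ m / (2 * m.factorial))) x := by
  induction m with
  | zero =>
      have h : HasDerivAt (fun s : ℝ => Real.exp (-s / 2)) (Real.exp (-x / 2) * (-1 / 2)) x := by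
        have h0 : HasDerivAt (fun s : ℝ => -s / 2) (-1 / 2) x :=
          ((hasDerivAt_id x).neg.div_const 2)
        exact h0.exp
      rw [show (fun s => Real.exp (-s / 2) * ∑ k ∈ Finset.range (0 + 1), (s / 2) ^ k / (k.factorial : ℝ))
          = fun s : ℝ => Real.exp (-s / 2) from by funext s; simp]
      convert h using 1
      simp
      ring
  | succ m ih =>
      have hexp : HasDerivAt (fun s : ℝ => Real.exp (-s / 2)) (Real.exp (-x / 2) * (-1 / 2)) x :=
        ((hasDerivAt_id x).neg.div_const 2).exp
      have hpow : HasDerivAt (fun s : ℝ => (s / 2) ^ (m + 1))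
          ((↑(m + 1) : ℝ) * (x / 2) ^ m * (1 / 2)) x := by
        have := ((hasDerivAt_id x).div_const 2).pow (m + 1)
        exact this.congr_deriv (by simp)
      have h2 : HasDerivAt (fun s : ℝ => Real.exp (-s / 2) * (s / 2) ^ (m + 1) / ((m+1).factorial : ℝ))
          ((Real.exp (-x / 2) * (-1 / 2) * (x / 2) ^ (m + 1)
            + Real.exp (-x / 2) * ((↑(m + 1) : ℝ) * (x / 2) ^ m * (1 / 2))) / ((m+1).factorial : ℝ)) x :=
        (hexp.mul hpow).div_const _
      have key := ih.add h2
      have hfun : (fun s => Real.exp (-s / 2) * ∑ k ∈ Finset.range (m + 1 + 1), (s / 2) ^ k / k.factorial)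
          = fun s => (Real.exp (-s / 2) * ∑ k ∈ Finset.range (m + 1), (s / 2) ^ k / k.factorial)
            + Real.exp (-s / 2) * (s / 2) ^ (m + 1) / ((m+1).factorial : ℝ) := by
        funext s; rw [Finset.sum_range_succ, mul_add, mul_div_assoc]
      rw [hfun]
      refine key.congr_deriv ?_
      have hm : ((m+1).factorial : ℝ) = (m + 1 : ℝ) * m.factorial := by
        push_cast [Nat.factorial_succ]; ring
      have h1 : (m.factorial : ℝ) ≠ 0 := Nat.cast_ne_zero.2 m.factorial_ne_zero
      have h3 : (m + 1 : ℝ) ≠ 0 := by positivity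
      rw [hm]
      field_simp
      push_cast
      ring

lemma chiSq_intOn (a : ℕ) (ha : 0 < a) {s : ℝ} (hs : 0 ≤ s) :
    IntegrableOn (chiSqDensity a) (Set.Ioi s) := by
  have h0 : IntegrableOn (fun x => x ^ (a-1) * Real.exp (-(1/2 * x)) / ((2:ℝ) ^ a * ((a-1).factorial : ℝ)))
      (Set.Ioi 0) := (intOn_pow_mul_exp (a - 1) (by norm_num : (0:ℝ) < 1/2)).div_const _
  have h := h0.mono_set (Set.Ioi_subset_Ioi hs)
  refine h.congr_fun (fun x hx => ?_) measurableSet_Ioi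
  have hx0 : (0:ℝ) ≤ x := le_of_lt (lt_of_le_of_lt hs hx)
  rw [chiSqDensity, if_pos hx0]
  ring_nf

lemma tail_int (a : ℕ) (ha : 0 < a) {s : ℝ} (hs : 0 ≤ s) :
    ∫ x in Set.Ioi s, chiSqDensity a x
      = Real.exp (-s / 2) * ∑ k ∈ Finset.range a, (s / 2) ^ k / k.factorial := by
  obtain ⟨m, rfl⟩ : ∃ m, a = m + 1 := ⟨a - 1, (Nat.succ_pred_eq_of_pos ha).symm⟩
  set F : ℝ → ℝ := fun s => -(Real.exp (-s / 2) * ∑ k ∈ Finset.range (m + 1), (s / 2) ^ k / k.factorial)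
    with hF
  have hd : ∀ x ∈ Set.Ioi s, HasDerivAt F (chiSqDensity (m + 1) x) x := by
    intro x hx
    have hx0 : (0:ℝ) ≤ x := le_of_lt (lt_of_le_of_lt hs hx)
    have := (hasDeriv_tail m x).neg
    rw [chiSq_eq m hx0]
    rw [neg_neg] at this; exact this
  have hcont : ContinuousWithinAt F (Set.Ici s) s :=
    (hasDeriv_tail m s).neg.continuousAt.continuousWithinAt
  have hlim : Tendsto F atTop (𝓝 0) := by
    rw [hF]
    have : Tendsto (fun s : ℝ => Real.exp (-s / 2) * ∑ k ∈ Finset.range (m + 1), (s / 2) ^ k / k.factorial)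
        atTop (𝓝 0) := by
      have h0 : Tendsto (fun s : ℝ => ∑ k ∈ Finset.range (m + 1),
          (s / 2) ^ k * Real.exp (-(s / 2)) / k.factorial) atTop (𝓝 (∑ k ∈ Finset.range (m + 1), (0:ℝ))) := by
        refine tendsto_finset_sum _ (fun k _ => ?_)
        have h1 : Tendsto (fun s : ℝ => s / 2) atTop atTop :=
          Tendsto.atTop_div_const two_pos tendsto_id
        have h2 := (Real.tendsto_pow_mul_exp_neg_atTop_nhds_zero k).comp h1
        have h3 := h2.div_const (k.factorial : ℝ)
        simpa using h3
      simp only [Finset.sum_const, smul_zero] at h0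
      refine h0.congr (fun s => ?_)
      rw [Finset.mul_sum]
      refine Finset.sum_congr rfl (fun k _ => ?_)
      rw [neg_div]
      ring
    simpa using this.neg
  have key := integral_Ioi_of_hasDerivAt_of_tendsto hcont hd (chiSq_intOn (m+1) (Nat.succ_pos m) hs) hlim
  rw [key, hF]
  ring

lemma nu_Ioi (a : ℕ) (ha : 0 < a) {s : ℝ} (hs : 0 ≤ s) :
    (volume.withDensity fun x => ENNReal.ofReal (chiSqDensity a x)) (Set.Ioi s)
      = ENNReal.ofReal (Real.exp (-s / 2) * ∑ k ∈ Finset.range a, (s / 2) ^ k / k.factorial) := by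
  rw [withDensity_apply _ measurableSet_Ioi,
    ← ofReal_integral_eq_lintegral_ofReal (chiSq_intOn a ha hs)
      (Filter.Eventually.of_forall fun x => chiSq_nonneg a x),
    tail_int a ha hs]

lemma chiSq_int_mul (a : ℕ) (ha : 0 < a) : Integrable (fun x => x * chiSqDensity a x) volume := by
  have h1 : IntegrableOn (fun x => x * chiSqDensity a x) (Set.Ioi 0) := by
    obtain ⟨m, rfl⟩ : ∃ m, a = m + 1 := ⟨a - 1, (Nat.succ_pred_eq_of_pos ha).symm⟩
    have h0 : IntegrableOn
        (fun x => x ^ (m + 1) * Real.exp (-(1/2 * x)) / ((2:ℝ) ^ (m+1) * (m.factorial : ℝ)))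
        (Set.Ioi 0) := (intOn_pow_mul_exp (m+1) (by norm_num : (0:ℝ) < 1/2)).div_const _
    refine h0.congr_fun (fun x hx => ?_) measurableSet_Ioi
    rw [chiSq_eq m (le_of_lt hx), div_pow]
    dsimp only
    rw [show Real.exp (-(1/2 * x)) = Real.exp (-x/2) from by ring_nf]
    have h2 : ((2:ℝ)) ^ m ≠ 0 := by positivity
    have h3 : (m.factorial : ℝ) ≠ 0 := Nat.cast_ne_zero.2 m.factorial_ne_zero
    field_simp
    ring
  have h2 : IntegrableOn (fun x => x * chiSqDensity a x) (Set.Iic 0) := by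
    refine (integrableOn_zero).congr_fun (fun x hx => ?_) measurableSet_Iic
    rcases lt_or_eq_of_le (Set.mem_Iic.1 hx) with h | h
    · rw [chiSqDensity, if_neg (not_le.2 h), mul_zero]
    · rw [h, zero_mul]
  have := h2.union h1
  rw [Set.Iic_union_Ioi] at this
  exact integrableOn_univ.1 this

lemma integral_wd_chiSq (a : ℕ) (g : ℝ → ℝ) :
    ∫ x, g x ∂(volume.withDensity fun x => ENNReal.ofReal (chiSqDensity a x))
      = ∫ x, chiSqDensity a x * g x := by
  rw [show (fun x => ENNReal.ofReal (chiSqDensity a x))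
      = fun x => (((fun x => (chiSqDensity a x).toNNReal) x : ℝ≥0) : ℝ≥0∞) from rfl]
  rw [integral_withDensity_eq_integral_smul ((chiSq_meas a).real_toNNReal) g]
  refine integral_congr_ae (Filter.Eventually.of_forall fun x => ?_)
  simp [NNReal.smul_def, Real.coe_toNNReal _ (chiSq_nonneg a x)]

lemma chiSq_moment (a : ℕ) (ha : 0 < a) :
    ∫ x, chiSqDensity a x * x = 2 * a := by
  obtain ⟨m, rfl⟩ : ∃ m, a = m + 1 := ⟨a - 1, (Nat.succ_pred_eq_of_pos ha).symm⟩
  rw [← setIntegral_eq_integral_of_forall_compl_eq_zero (s := Set.Ioi (0:ℝ)) ?_]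
  · rw [setIntegral_congr_fun measurableSet_Ioi
      (g := fun x => (x ^ (m+1) * Real.exp (-((1:ℝ)/2 * x))) / ((2:ℝ) ^ (m+1) * (m.factorial : ℝ)))
      (fun x hx => ?_)]
    · rw [integral_div, gammaInt (m+1) (by norm_num : (0:ℝ) < 1/2)]
      have h3 : (m.factorial : ℝ) ≠ 0 := Nat.cast_ne_zero.2 m.factorial_ne_zero
      rw [show ((m+1).factorial : ℝ) = (m+1 : ℝ) * m.factorial from by push_cast [Nat.factorial_succ]; ring]
      rw [show ((1:ℝ)/2) ^ (m + 1 + 1) = 1 / 2 ^ (m+2) from by rw [div_pow, one_pow]]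
      have h4 : ((2:ℝ)) ^ m ≠ 0 := by positivity
      push_cast
      field_simp
      ring
    · rw [chiSq_eq m (le_of_lt hx), div_pow]
      dsimp only
      rw [show Real.exp (-(1/2 * x)) = Real.exp (-x/2) from by ring_nf]
      have h2 : ((2:ℝ)) ^ m ≠ 0 := by positivity
      have h3 : (m.factorial : ℝ) ≠ 0 := Nat.cast_ne_zero.2 m.factorial_ne_zero
      field_simp
      ring
  · intro x hx
    rcases lt_or_eq_of_le (not_lt.1 (fun h => hx (Set.mem_Ioi.2 h)) : x ≤ 0) with h | h
    · rw [chiSqDensity, if_neg (not_le.2 h), zero_mul]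
    · rw [h, mul_zero]

lemma final_int (a b : ℕ) (ha : 0 < a) (hb : 0 < b) :
    ∫ t in Set.Ioi (0:ℝ),
      (Real.exp (-(t * (2*(a:ℝ))) / 2) * ∑ k ∈ Finset.range a, ((t * (2*(a:ℝ))) / 2) ^ k / k.factorial) *
      (Real.exp (-(t * (2*(b:ℝ))) / 2) * ∑ l ∈ Finset.range b, ((t * (2*(b:ℝ))) / 2) ^ l / l.factorial)
    = (1 / (a + b : ℝ)) * ∑ k ∈ Finset.range a, ∑ l ∈ Finset.range b,
        ((a:ℝ)/(a+b))^k * ((b:ℝ)/(a+b))^l * ((k+l).choose k : ℝ) := by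
  have hab : (0:ℝ) < (a:ℝ) + b := by
    have : (0:ℝ) < (a:ℝ) := Nat.cast_pos.2 ha
    have : (0:ℝ) ≤ (b:ℝ) := Nat.cast_nonneg b
    linarith
  rw [setIntegral_congr_fun measurableSet_Ioi
      (g := fun t => ∑ k ∈ Finset.range a, ∑ l ∈ Finset.range b,
        ((a:ℝ)^k * (b:ℝ)^l / (k.factorial * l.factorial)) * (t ^ (k+l) * Real.exp (-(((a:ℝ)+b) * t))))
      (fun t _ => ?_)]
  · rw [integral_finset_sum _ (fun k _ => integrable_finset_sum _
      (fun l _ => ((intOn_pow_mul_exp (k+l) hab).const_mul _)))]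
    rw [Finset.mul_sum]
    refine Finset.sum_congr rfl fun k _ => ?_
    rw [integral_finset_sum _ (fun l _ => ((intOn_pow_mul_exp (k+l) hab).const_mul _))]
    rw [Finset.mul_sum]
    refine Finset.sum_congr rfl fun l _ => ?_
    rw [MeasureTheory.integral_const_mul, gammaInt (k+l) hab]
    have hcs : (k + l).choose k = (k + l).choose l := by
      have := Nat.choose_symm (Nat.le_add_right k l)
      rw [Nat.add_sub_cancel_left] at this; exact this.symm
    have hfac : ((k+l).choose k : ℝ) * k.factorial * l.factorial = ((k+l).factorial : ℝ) := by
      rw [hcs]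
      exact_mod_cast congrArg Nat.cast (Nat.add_choose_mul_factorial_mul_factorial k l)
    rw [div_pow, div_pow, ← hfac]
    have h1 : (k.factorial : ℝ) ≠ 0 := Nat.cast_ne_zero.2 k.factorial_ne_zero
    have h2 : (l.factorial : ℝ) ≠ 0 := Nat.cast_ne_zero.2 l.factorial_ne_zero
    have h3 : ((a:ℝ)+b) ≠ 0 := ne_of_gt hab
    field_simp
    ring
  · have e1 : Real.exp (-(t * (2*(a:ℝ))) / 2) * Real.exp (-(t * (2*(b:ℝ))) / 2)
        = Real.exp (-(((a:ℝ)+b) * t)) := by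
      rw [← Real.exp_add]; congr 1; ring
    rw [mul_mul_mul_comm, e1, Finset.sum_mul_sum, Finset.mul_sum]
    refine Finset.sum_congr rfl fun k _ => ?_
    rw [Finset.mul_sum]
    refine Finset.sum_congr rfl fun l _ => ?_
    rw [pow_add]
    ring

/-- For independent `X ~ χ²_{2a}` and `Y ~ χ²_{2b}`,
`(1/2)·E|X/(2a) − Y/(2b)| = 1 − (1/(a+b)) Σ_{k<a} Σ_{ℓ<b} p^k (1−p)^ℓ C(k+ℓ,k)`,
with `p = a/(a+b)`. -/
theorem chiSq_mean_abs_diff {Ω : Type*} [MeasurableSpace Ω] (μ : Measure Ω)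
    [IsProbabilityMeasure μ] (a b : ℕ) (ha : 0 < a) (hb : 0 < b)
    (X Y : Ω → ℝ) (hX : Measurable X) (hY : Measurable Y)
    (hindep : IndepFun X Y μ)
    (hXlaw : Measure.map X μ = volume.withDensity fun x => ENNReal.ofReal (chiSqDensity a x))
    (hYlaw : Measure.map Y μ = volume.withDensity fun x => ENNReal.ofReal (chiSqDensity b x)) :
    (1 / 2 : ℝ) * ∫ ω, |X ω / (2 * a) - Y ω / (2 * b)| ∂μ =
      1 - (1 / (a + b : ℝ)) * ∑ k ∈ Finset.range a, ∑ l ∈ Finset.range b,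
        ((a : ℝ) / (a + b)) ^ k * ((b : ℝ) / (a + b)) ^ l * ((k + l).choose k : ℝ) := by
  have haR : (0:ℝ) < (a:ℝ) := Nat.cast_pos.2 ha
  have hbR : (0:ℝ) < (b:ℝ) := Nat.cast_pos.2 hb
  -- integrability of X and Y
  have hint : ∀ (Z : Ω → ℝ) (c : ℕ), 0 < c → Measurable Z →
      Measure.map Z μ = volume.withDensity (fun x => ENNReal.ofReal (chiSqDensity c x)) →
      Integrable Z μ := by
    intro Z c hc hZ hZlaw
    have h1 : Integrable (fun x : ℝ => x) (Measure.map Z μ) := by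
      rw [hZlaw, integrable_withDensity_iff ((chiSq_meas c).ennreal_ofReal)
        (Eventually.of_forall fun x => ENNReal.ofReal_lt_top)]
      refine (chiSq_int_mul c hc).congr (Eventually.of_forall fun x => ?_)
      dsimp only
      rw [ENNReal.toReal_ofReal (chiSq_nonneg c x)]
    exact (integrable_map_measure (f := Z) (g := fun x : ℝ => x)
      measurable_id.aestronglyMeasurable hZ.aemeasurable).1 h1
  have hXint : Integrable X μ := hint X a ha hX hXlaw
  have hYint : Integrable Y μ := hint Y b hb hY hYlaw
  -- expectations
  have hmean : ∀ (Z : Ω → ℝ) (c : ℕ), 0 < c → Measurable Z →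
      Measure.map Z μ = volume.withDensity (fun x => ENNReal.ofReal (chiSqDensity c x)) →
      ∫ ω, Z ω ∂μ = 2 * c := by
    intro Z c hc hZ hZlaw
    have h := integral_map (φ := Z) (f := fun x : ℝ => x) hZ.aemeasurable
      (measurable_id.aestronglyMeasurable : AEStronglyMeasurable (fun x : ℝ => x) (Measure.map Z μ))
    rw [← h, hZlaw, integral_wd_chiSq c (fun x => x), chiSq_moment c hc]
  have hEX : ∫ ω, X ω ∂μ = 2 * a := hmean X a ha hX hXlaw
  have hEY : ∫ ω, Y ω ∂μ = 2 * b := hmean Y b hb hY hYlaw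
  -- a.e. nonnegativity
  have hnn : ∀ (Z : Ω → ℝ) (c : ℕ), Measurable Z →
      Measure.map Z μ = volume.withDensity (fun x => ENNReal.ofReal (chiSqDensity c x)) →
      0 ≤ᵐ[μ] Z := by
    intro Z c hZ hZlaw
    have h0 : μ (Z ⁻¹' (Set.Iio 0)) = 0 := by
      rw [← Measure.map_apply hZ measurableSet_Iio, hZlaw,
        withDensity_apply _ measurableSet_Iio]
      rw [setLIntegral_congr_fun measurableSet_Iio
        ((fun x (hx : x < 0) => by
          rw [chiSqDensity, if_neg (not_le.2 hx), ENNReal.ofReal_zero] : ∀ x ∈ Set.Iio (0:ℝ),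
            ENNReal.ofReal (chiSqDensity c x) = (fun _ => (0:ℝ≥0∞)) x))]
      simp
    refine (ae_iff).2 ?_
    simpa only [not_le, Set.preimage, Set.mem_Iio, Pi.zero_apply] using h0
  have hXnn := hnn X a hX hXlaw
  have hYnn := hnn Y b hY hYlaw
  set U : Ω → ℝ := fun ω => X ω / (2 * a) with hU
  set V : Ω → ℝ := fun ω => Y ω / (2 * b) with hV
  have hUint : Integrable U μ := hXint.div_const _
  have hVint : Integrable V μ := hYint.div_const _
  set M : Ω → ℝ := fun ω => min (U ω) (V ω) with hM
  have hMint : Integrable M μ := by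
    have h := ((hUint.add hVint).sub ((hUint.sub hVint).abs)).div_const 2
    refine h.congr (Eventually.of_forall fun ω => ?_)
    simp only [Pi.add_apply, Pi.sub_apply, hM]
    rcases le_total (U ω) (V ω) with h' | h'
    · rw [abs_of_nonpos (sub_nonpos.2 h'), min_eq_left h']; ring
    · rw [abs_of_nonneg (sub_nonneg.2 h'), min_eq_right h']; ring
  -- E|U - V| = EU + EV - 2 E min
  have hE : ∫ ω, |U ω - V ω| ∂μ
      = (∫ ω, U ω ∂μ) + (∫ ω, V ω ∂μ) - 2 * ∫ ω, M ω ∂μ := by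
    rw [show (fun ω => |U ω - V ω|) = fun ω => (U ω + V ω) - 2 * M ω from funext fun ω => by
      simp only [hM]
      rcases le_total (U ω) (V ω) with h' | h'
      · rw [abs_of_nonpos (sub_nonpos.2 h'), min_eq_left h']; ring
      · rw [abs_of_nonneg (sub_nonneg.2 h'), min_eq_right h']; ring]
    have h1 : ∫ ω, (U ω + V ω) - 2 * M ω ∂μ
        = (∫ ω, U ω + V ω ∂μ) - ∫ ω, 2 * M ω ∂μ :=
      integral_sub (hUint.add hVint) (hMint.const_mul 2)
    have h2 : ∫ ω, U ω + V ω ∂μ = (∫ ω, U ω ∂μ) + ∫ ω, V ω ∂μ := integral_add hUint hVint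
    have h3 : ∫ ω, 2 * M ω ∂μ = 2 * ∫ ω, M ω ∂μ := integral_const_mul 2 M
    rw [h1, h2, h3]
  have hEU : ∫ ω, U ω ∂μ = 1 := by
    rw [hU, integral_div, hEX, div_self (ne_of_gt (by linarith : (0:ℝ) < 2 * (a:ℝ)))]
  have hEV : ∫ ω, V ω ∂μ = 1 := by
    rw [hV, integral_div, hEY, div_self (ne_of_gt (by linarith : (0:ℝ) < 2 * (b:ℝ)))]
  -- layer cake for E min
  have hMnn : 0 ≤ᵐ[μ] M := by
    filter_upwards [hXnn, hYnn] with ω h1 h2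
    refine le_min (div_nonneg h1 (by linarith)) (div_nonneg h2 (by linarith))
  have hlc := hMint.integral_eq_integral_meas_lt hMnn
  have hmeas : ∀ t ∈ Set.Ioi (0:ℝ), (μ {ω | t < M ω}).toReal
      = (Real.exp (-(t * (2*(a:ℝ))) / 2) *
          ∑ k ∈ Finset.range a, ((t * (2*(a:ℝ))) / 2) ^ k / k.factorial) *
        (Real.exp (-(t * (2*(b:ℝ))) / 2) *
          ∑ l ∈ Finset.range b, ((t * (2*(b:ℝ))) / 2) ^ l / l.factorial) := by
    intro t ht
    have ht0 : (0:ℝ) < t := ht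
    have hset : {ω | t < M ω} = X ⁻¹' (Set.Ioi (t * (2*(a:ℝ)))) ∩ Y ⁻¹' (Set.Ioi (t * (2*(b:ℝ)))) := by
      ext ω
      simp only [hM, hU, hV, Set.mem_setOf_eq, lt_min_iff, Set.mem_inter_iff, Set.mem_preimage,
        Set.mem_Ioi, lt_div_iff₀ (by positivity : (0:ℝ) < 2 * (a:ℝ)),
        lt_div_iff₀ (by positivity : (0:ℝ) < 2 * (b:ℝ))]
    have hta : (0:ℝ) ≤ t * (2 * (a:ℝ)) := mul_nonneg ht0.le (by linarith)
    have htb : (0:ℝ) ≤ t * (2 * (b:ℝ)) := mul_nonneg ht0.le (by linarith)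
    have hnn1 : (0:ℝ) ≤ Real.exp (-(t * (2*(a:ℝ))) / 2) *
        ∑ k ∈ Finset.range a, ((t * (2*(a:ℝ))) / 2) ^ k / k.factorial :=
      mul_nonneg (Real.exp_nonneg _) (Finset.sum_nonneg fun k _ =>
        div_nonneg (pow_nonneg (by linarith) k) (Nat.cast_nonneg _))
    have hnn2 : (0:ℝ) ≤ Real.exp (-(t * (2*(b:ℝ))) / 2) *
        ∑ l ∈ Finset.range b, ((t * (2*(b:ℝ))) / 2) ^ l / l.factorial :=
      mul_nonneg (Real.exp_nonneg _) (Finset.sum_nonneg fun l _ =>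
        div_nonneg (pow_nonneg (by linarith) l) (Nat.cast_nonneg _))
    rw [hset, hindep.measure_inter_preimage_eq_mul _ _ measurableSet_Ioi measurableSet_Ioi,
      ← Measure.map_apply hX measurableSet_Ioi, ← Measure.map_apply hY measurableSet_Ioi,
      hXlaw, hYlaw, nu_Ioi a ha hta, nu_Ioi b hb htb,
      ENNReal.toReal_mul, ENNReal.toReal_ofReal hnn1, ENNReal.toReal_ofReal hnn2]
  have hImin : ∫ ω, M ω ∂μ = (1 / (a + b : ℝ)) * ∑ k ∈ Finset.range a, ∑ l ∈ Finset.range b,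
      ((a : ℝ) / (a + b)) ^ k * ((b : ℝ) / (a + b)) ^ l * ((k + l).choose k : ℝ) := by
    rw [hlc, setIntegral_congr_fun measurableSet_Ioi (fun t ht => (measureReal_def _ _).trans (hmeas t ht)), final_int a b ha hb]
  calc (1 / 2 : ℝ) * ∫ ω, |X ω / (2 * a) - Y ω / (2 * b)| ∂μ
      = (1/2 : ℝ) * ((∫ ω, U ω ∂μ) + (∫ ω, V ω ∂μ) - 2 * ∫ ω, M ω ∂μ) := by rw [← hE]
    _ = 1 - ∫ ω, M ω ∂μ := by rw [hEU, hEV]; ring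
    _ = _ := by rw [hImin]
end

section
/- Let (p_k, P_k)_{k=1}^n be a weighted spherical 4-design on ℂ^d and ξ a traceless Hermitian operator. Let S take value d·Tr(ξ P_k) with probability p_k. Then E[S⁴] = (d³/((d+1)(d+2)(d+3)))·(3·(Tr(ξ²))² + 6·Tr(ξ⁴)) ≤ (d/(d+1))³ · 9·(Tr(ξ²))². -/
open ComplexOrder

/-- The 4-fold tensor power of a matrix on `ℂ^d`, as a matrix on `(ℂ^d)^{⊗4}`
with index type `Fin 4 → Fin d`. -/
def tpow4 {d : ℕ} (A : Matrix (Fin d) (Fin d) ℂ) :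
    Matrix (Fin 4 → Fin d) (Fin 4 → Fin d) ℂ :=
  fun a b => ∏ i, A (a i) (b i)

/-- The unitary permuting the four tensor factors of `(ℂ^d)^{⊗4}` according to `π`. -/
def permOp (d : ℕ) (π : Equiv.Perm (Fin 4)) :
    Matrix (Fin 4 → Fin d) (Fin 4 → Fin d) ℂ :=
  fun a b => if ∀ i, a (π i) = b i then 1 else 0

lemma tpow4_mul {d : ℕ} (A B : Matrix (Fin d) (Fin d) ℂ) :
    tpow4 A * tpow4 B = tpow4 (A * B) := by
  ext a b
  simp only [tpow4, Matrix.mul_apply]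
  rw [Fintype.prod_sum (f := fun i j => A (a i) j * B j (b i))]
  simp [Finset.prod_mul_distrib]

lemma trace_tpow4 {d : ℕ} (A : Matrix (Fin d) (Fin d) ℂ) :
    (tpow4 A).trace = A.trace ^ 4 := by
  simp only [Matrix.trace, Matrix.diag, tpow4]
  rw [Fintype.sum_pow]

noncomputable def gg {d : ℕ} (ξ : Matrix (Fin d) (Fin d) ℂ) (f : Fin 4 → Fin 4) : ℂ :=
  ∑ b : Fin 4 → Fin d, ∏ i, ξ (b (f i)) (b i)

lemma trace_tpow4_perm {d : ℕ} (ξ : Matrix (Fin d) (Fin d) ℂ) (π : Equiv.Perm (Fin 4)) :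
    (tpow4 ξ * permOp d π).trace = gg ξ ⇑π := by
  simp only [Matrix.trace, Matrix.diag, Matrix.mul_apply, tpow4, permOp, gg]
  rw [Finset.sum_comm]
  refine Finset.sum_congr rfl fun b _ => ?_
  rw [Finset.sum_eq_single (fun i => b (π i))]
  · simp
  · intro a _ ha
    rw [if_neg, mul_zero]
    intro h
    exact ha (funext fun i => (h i).symm)
  · simp

def pe (d : ℕ) : (Fin d × Fin d × Fin d × Fin d) ≃ (Fin 4 → Fin d) where
  toFun x := ![x.1, x.2.1, x.2.2.1, x.2.2.2]
  invFun b := (b 0, b 1, b 2, b 3)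
  left_inv x := rfl
  right_inv b := by funext i; fin_cases i <;> rfl

example : (![1,0,3,2] : Fin 4 → Fin 4) 2 = 3 := by simp
example : (![1,0,3,2] : Fin 4 → Fin 4) 3 = 2 := by simp

lemma gg_expand {d : ℕ} (ξ : Matrix (Fin d) (Fin d) ℂ) (f : Fin 4 → Fin 4) :
    gg ξ f = ∑ b0, ∑ b1, ∑ b2, ∑ b3,
      ξ (![b0,b1,b2,b3] (f 0)) b0 * (ξ (![b0,b1,b2,b3] (f 1)) b1 *
        (ξ (![b0,b1,b2,b3] (f 2)) b2 * ξ (![b0,b1,b2,b3] (f 3)) b3)) := by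
  rw [gg, ← Equiv.sum_comp (pe d)]
  simp only [Fintype.sum_prod_type]
  refine Finset.sum_congr rfl fun b0 _ => Finset.sum_congr rfl fun b1 _ =>
    Finset.sum_congr rfl fun b2 _ => Finset.sum_congr rfl fun b3 _ => ?_
  rw [Fin.prod_univ_four]
  rw [mul_assoc, mul_assoc]
  rfl

lemma gg_conj {d : ℕ} (ξ : Matrix (Fin d) (Fin d) ℂ) (τ : Equiv.Perm (Fin 4))
    (f : Fin 4 → Fin 4) : gg ξ (⇑τ ∘ f ∘ ⇑τ.symm) = gg ξ f := by
  unfold gg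
  refine Fintype.sum_equiv (Equiv.arrowCongr τ.symm (Equiv.refl (Fin d))) _ _ fun b => ?_
  refine (Fintype.prod_equiv τ _ _ fun i => ?_).symm
  simp [Equiv.arrowCongr]

variable {d : ℕ} (ξ : Matrix (Fin d) (Fin d) ℂ)

lemma can_id : gg ξ ![0,1,2,3] = ξ.trace * ξ.trace * ξ.trace * ξ.trace := by
  rw [gg_expand]
  simp only [Matrix.cons_val_zero, Matrix.cons_val_one, Matrix.head_cons,
    Matrix.cons_val_two, Matrix.cons_val_three, Matrix.tail_cons, Matrix.head_fin_const]
  simp only [Matrix.trace, Matrix.diag, Matrix.mul_apply, Finset.sum_mul, Finset.mul_sum]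
  refine Finset.sum_congr rfl fun a _ => Finset.sum_congr rfl fun b _ =>
    Finset.sum_congr rfl fun c _ => Finset.sum_congr rfl fun e _ => by ring

lemma can_t2 : gg ξ ![1,0,2,3] = ξ.trace * ξ.trace * (ξ*ξ).trace := by
  rw [gg_expand]
  simp only [Matrix.cons_val_zero, Matrix.cons_val_one, Matrix.head_cons,
    Matrix.cons_val_two, Matrix.cons_val_three, Matrix.tail_cons, Matrix.head_fin_const]
  simp only [Matrix.trace, Matrix.diag, Matrix.mul_apply, Finset.sum_mul, Finset.mul_sum]
  refine Finset.sum_congr rfl fun a _ => Finset.sum_congr rfl fun b _ =>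
    Finset.sum_congr rfl fun c _ => Finset.sum_congr rfl fun e _ => by ring

lemma can_t22 : gg ξ ![1,0,3,2] = (ξ*ξ).trace * (ξ*ξ).trace := by
  rw [gg_expand]
  simp only [Matrix.cons_val_zero, Matrix.cons_val_one, Matrix.head_cons,
    Matrix.cons_val_two, Matrix.cons_val_three, Matrix.tail_cons, Matrix.head_fin_const]
  simp only [Matrix.trace, Matrix.diag, Matrix.mul_apply, Finset.sum_mul, Finset.mul_sum]
  refine Finset.sum_congr rfl fun a _ => Finset.sum_congr rfl fun b _ =>
    Finset.sum_congr rfl fun c _ => Finset.sum_congr rfl fun e _ => by ring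

lemma can_t3 : gg ξ ![1,2,0,3] = ξ.trace * (ξ*ξ*ξ).trace := by
  rw [gg_expand]
  simp only [Matrix.cons_val_zero, Matrix.cons_val_one, Matrix.head_cons,
    Matrix.cons_val_two, Matrix.cons_val_three, Matrix.tail_cons, Matrix.head_fin_const]
  simp only [Matrix.trace, Matrix.diag, Matrix.mul_apply, Finset.sum_mul, Finset.mul_sum]
  refine Finset.sum_congr rfl fun a _ => Finset.sum_congr rfl fun b _ =>
    Finset.sum_congr rfl fun c _ => Finset.sum_congr rfl fun e _ => by ring

lemma can_t4 : gg ξ ![1,2,3,0] = (ξ*ξ*ξ*ξ).trace := by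
  rw [gg_expand]
  simp only [Matrix.cons_val_zero, Matrix.cons_val_one, Matrix.head_cons,
    Matrix.cons_val_two, Matrix.cons_val_three, Matrix.tail_cons, Matrix.head_fin_const]
  simp only [Matrix.trace, Matrix.diag, Matrix.mul_apply, Finset.sum_mul, Finset.mul_sum]
  refine Finset.sum_congr rfl fun a _ => Finset.sum_congr rfl fun b _ =>
    Finset.sum_congr rfl fun c _ => Finset.sum_congr rfl fun e _ => by ring

def pm0 : Equiv.Perm (Fin 4) := ⟨![0,1,2,3], ![0,1,2,3], by decide, by decide⟩
def pm1 : Equiv.Perm (Fin 4) := ⟨![0,1,3,2], ![0,1,3,2], by decide, by decide⟩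
def pm2 : Equiv.Perm (Fin 4) := ⟨![0,2,1,3], ![0,2,1,3], by decide, by decide⟩
def pm3 : Equiv.Perm (Fin 4) := ⟨![0,2,3,1], ![0,3,1,2], by decide, by decide⟩
def pm4 : Equiv.Perm (Fin 4) := ⟨![0,3,1,2], ![0,2,3,1], by decide, by decide⟩
def pm5 : Equiv.Perm (Fin 4) := ⟨![0,3,2,1], ![0,3,2,1], by decide, by decide⟩
def pm6 : Equiv.Perm (Fin 4) := ⟨![1,0,2,3], ![1,0,2,3], by decide, by decide⟩
def pm7 : Equiv.Perm (Fin 4) := ⟨![1,0,3,2], ![1,0,3,2], by decide, by decide⟩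
def pm8 : Equiv.Perm (Fin 4) := ⟨![1,2,0,3], ![2,0,1,3], by decide, by decide⟩
def pm9 : Equiv.Perm (Fin 4) := ⟨![1,2,3,0], ![3,0,1,2], by decide, by decide⟩
def pm10 : Equiv.Perm (Fin 4) := ⟨![1,3,0,2], ![2,0,3,1], by decide, by decide⟩
def pm11 : Equiv.Perm (Fin 4) := ⟨![1,3,2,0], ![3,0,2,1], by decide, by decide⟩
def pm12 : Equiv.Perm (Fin 4) := ⟨![2,0,1,3], ![1,2,0,3], by decide, by decide⟩
def pm13 : Equiv.Perm (Fin 4) := ⟨![2,0,3,1], ![1,3,0,2], by decide, by decide⟩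
def pm14 : Equiv.Perm (Fin 4) := ⟨![2,1,0,3], ![2,1,0,3], by decide, by decide⟩
def pm15 : Equiv.Perm (Fin 4) := ⟨![2,1,3,0], ![3,1,0,2], by decide, by decide⟩
def pm16 : Equiv.Perm (Fin 4) := ⟨![2,3,0,1], ![2,3,0,1], by decide, by decide⟩
def pm17 : Equiv.Perm (Fin 4) := ⟨![2,3,1,0], ![3,2,0,1], by decide, by decide⟩
def pm18 : Equiv.Perm (Fin 4) := ⟨![3,0,1,2], ![1,2,3,0], by decide, by decide⟩
def pm19 : Equiv.Perm (Fin 4) := ⟨![3,0,2,1], ![1,3,2,0], by decide, by decide⟩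
def pm20 : Equiv.Perm (Fin 4) := ⟨![3,1,0,2], ![2,1,3,0], by decide, by decide⟩
def pm21 : Equiv.Perm (Fin 4) := ⟨![3,1,2,0], ![3,1,2,0], by decide, by decide⟩
def pm22 : Equiv.Perm (Fin 4) := ⟨![3,2,0,1], ![2,3,1,0], by decide, by decide⟩
def pm23 : Equiv.Perm (Fin 4) := ⟨![3,2,1,0], ![3,2,1,0], by decide, by decide⟩

variable {d : ℕ} (ξ : Matrix (Fin d) (Fin d) ℂ)

lemma gval0 : gg ξ ⇑pm0 = ξ.trace * ξ.trace * ξ.trace * ξ.trace := by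
  have h := gg_conj ξ ⟨![0,1,2,3], ![0,1,2,3], by decide, by decide⟩ ![0,1,2,3]
  rw [show ((⟨![0,1,2,3], ![0,1,2,3], by decide, by decide⟩ : Equiv.Perm (Fin 4)) : Fin 4 → Fin 4) ∘ (![0,1,2,3] : Fin 4 → Fin 4) ∘ ⇑(⟨![0,1,2,3], ![0,1,2,3], by decide, by decide⟩ : Equiv.Perm (Fin 4)).symm = ⇑pm0 from by funext i; fin_cases i <;> rfl] at h
  rw [h, can_id ξ]


lemma gval1 : gg ξ ⇑pm1 = ξ.trace * ξ.trace * (ξ*ξ).trace := by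
  have h := gg_conj ξ ⟨![2,3,0,1], ![2,3,0,1], by decide, by decide⟩ ![1,0,2,3]
  rw [show ((⟨![2,3,0,1], ![2,3,0,1], by decide, by decide⟩ : Equiv.Perm (Fin 4)) : Fin 4 → Fin 4) ∘ (![1,0,2,3] : Fin 4 → Fin 4) ∘ ⇑(⟨![2,3,0,1], ![2,3,0,1], by decide, by decide⟩ : Equiv.Perm (Fin 4)).symm = ⇑pm1 from by funext i; fin_cases i <;> rfl] at h
  rw [h, can_t2 ξ]


lemma gval2 : gg ξ ⇑pm2 = ξ.trace * ξ.trace * (ξ*ξ).trace := by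
  have h := gg_conj ξ ⟨![1,2,0,3], ![2,0,1,3], by decide, by decide⟩ ![1,0,2,3]
  rw [show ((⟨![1,2,0,3], ![2,0,1,3], by decide, by decide⟩ : Equiv.Perm (Fin 4)) : Fin 4 → Fin 4) ∘ (![1,0,2,3] : Fin 4 → Fin 4) ∘ ⇑(⟨![1,2,0,3], ![2,0,1,3], by decide, by decide⟩ : Equiv.Perm (Fin 4)).symm = ⇑pm2 from by funext i; fin_cases i <;> rfl] at h
  rw [h, can_t2 ξ]


lemma gval3 : gg ξ ⇑pm3 = ξ.trace * (ξ*ξ*ξ).trace := by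
  have h := gg_conj ξ ⟨![1,2,3,0], ![3,0,1,2], by decide, by decide⟩ ![1,2,0,3]
  rw [show ((⟨![1,2,3,0], ![3,0,1,2], by decide, by decide⟩ : Equiv.Perm (Fin 4)) : Fin 4 → Fin 4) ∘ (![1,2,0,3] : Fin 4 → Fin 4) ∘ ⇑(⟨![1,2,3,0], ![3,0,1,2], by decide, by decide⟩ : Equiv.Perm (Fin 4)).symm = ⇑pm3 from by funext i; fin_cases i <;> rfl] at h
  rw [h, can_t3 ξ]


lemma gval4 : gg ξ ⇑pm4 = ξ.trace * (ξ*ξ*ξ).trace := by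
  have h := gg_conj ξ ⟨![1,3,2,0], ![3,0,2,1], by decide, by decide⟩ ![1,2,0,3]
  rw [show ((⟨![1,3,2,0], ![3,0,2,1], by decide, by decide⟩ : Equiv.Perm (Fin 4)) : Fin 4 → Fin 4) ∘ (![1,2,0,3] : Fin 4 → Fin 4) ∘ ⇑(⟨![1,3,2,0], ![3,0,2,1], by decide, by decide⟩ : Equiv.Perm (Fin 4)).symm = ⇑pm4 from by funext i; fin_cases i <;> rfl] at h
  rw [h, can_t3 ξ]


lemma gval5 : gg ξ ⇑pm5 = ξ.trace * ξ.trace * (ξ*ξ).trace := by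
  have h := gg_conj ξ ⟨![1,3,0,2], ![2,0,3,1], by decide, by decide⟩ ![1,0,2,3]
  rw [show ((⟨![1,3,0,2], ![2,0,3,1], by decide, by decide⟩ : Equiv.Perm (Fin 4)) : Fin 4 → Fin 4) ∘ (![1,0,2,3] : Fin 4 → Fin 4) ∘ ⇑(⟨![1,3,0,2], ![2,0,3,1], by decide, by decide⟩ : Equiv.Perm (Fin 4)).symm = ⇑pm5 from by funext i; fin_cases i <;> rfl] at h
  rw [h, can_t2 ξ]


lemma gval6 : gg ξ ⇑pm6 = ξ.trace * ξ.trace * (ξ*ξ).trace := by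
  have h := gg_conj ξ ⟨![0,1,2,3], ![0,1,2,3], by decide, by decide⟩ ![1,0,2,3]
  rw [show ((⟨![0,1,2,3], ![0,1,2,3], by decide, by decide⟩ : Equiv.Perm (Fin 4)) : Fin 4 → Fin 4) ∘ (![1,0,2,3] : Fin 4 → Fin 4) ∘ ⇑(⟨![0,1,2,3], ![0,1,2,3], by decide, by decide⟩ : Equiv.Perm (Fin 4)).symm = ⇑pm6 from by funext i; fin_cases i <;> rfl] at h
  rw [h, can_t2 ξ]


lemma gval7 : gg ξ ⇑pm7 = (ξ*ξ).trace * (ξ*ξ).trace := by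
  have h := gg_conj ξ ⟨![0,1,2,3], ![0,1,2,3], by decide, by decide⟩ ![1,0,3,2]
  rw [show ((⟨![0,1,2,3], ![0,1,2,3], by decide, by decide⟩ : Equiv.Perm (Fin 4)) : Fin 4 → Fin 4) ∘ (![1,0,3,2] : Fin 4 → Fin 4) ∘ ⇑(⟨![0,1,2,3], ![0,1,2,3], by decide, by decide⟩ : Equiv.Perm (Fin 4)).symm = ⇑pm7 from by funext i; fin_cases i <;> rfl] at h
  rw [h, can_t22 ξ]


lemma gval8 : gg ξ ⇑pm8 = ξ.trace * (ξ*ξ*ξ).trace := by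
  have h := gg_conj ξ ⟨![0,1,2,3], ![0,1,2,3], by decide, by decide⟩ ![1,2,0,3]
  rw [show ((⟨![0,1,2,3], ![0,1,2,3], by decide, by decide⟩ : Equiv.Perm (Fin 4)) : Fin 4 → Fin 4) ∘ (![1,2,0,3] : Fin 4 → Fin 4) ∘ ⇑(⟨![0,1,2,3], ![0,1,2,3], by decide, by decide⟩ : Equiv.Perm (Fin 4)).symm = ⇑pm8 from by funext i; fin_cases i <;> rfl] at h
  rw [h, can_t3 ξ]


lemma gval9 : gg ξ ⇑pm9 = (ξ*ξ*ξ*ξ).trace := by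
  have h := gg_conj ξ ⟨![0,1,2,3], ![0,1,2,3], by decide, by decide⟩ ![1,2,3,0]
  rw [show ((⟨![0,1,2,3], ![0,1,2,3], by decide, by decide⟩ : Equiv.Perm (Fin 4)) : Fin 4 → Fin 4) ∘ (![1,2,3,0] : Fin 4 → Fin 4) ∘ ⇑(⟨![0,1,2,3], ![0,1,2,3], by decide, by decide⟩ : Equiv.Perm (Fin 4)).symm = ⇑pm9 from by funext i; fin_cases i <;> rfl] at h
  rw [h, can_t4 ξ]


lemma gval10 : gg ξ ⇑pm10 = (ξ*ξ*ξ*ξ).trace := by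
  have h := gg_conj ξ ⟨![0,1,3,2], ![0,1,3,2], by decide, by decide⟩ ![1,2,3,0]
  rw [show ((⟨![0,1,3,2], ![0,1,3,2], by decide, by decide⟩ : Equiv.Perm (Fin 4)) : Fin 4 → Fin 4) ∘ (![1,2,3,0] : Fin 4 → Fin 4) ∘ ⇑(⟨![0,1,3,2], ![0,1,3,2], by decide, by decide⟩ : Equiv.Perm (Fin 4)).symm = ⇑pm10 from by funext i; fin_cases i <;> rfl] at h
  rw [h, can_t4 ξ]


lemma gval11 : gg ξ ⇑pm11 = ξ.trace * (ξ*ξ*ξ).trace := by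
  have h := gg_conj ξ ⟨![0,1,3,2], ![0,1,3,2], by decide, by decide⟩ ![1,2,0,3]
  rw [show ((⟨![0,1,3,2], ![0,1,3,2], by decide, by decide⟩ : Equiv.Perm (Fin 4)) : Fin 4 → Fin 4) ∘ (![1,2,0,3] : Fin 4 → Fin 4) ∘ ⇑(⟨![0,1,3,2], ![0,1,3,2], by decide, by decide⟩ : Equiv.Perm (Fin 4)).symm = ⇑pm11 from by funext i; fin_cases i <;> rfl] at h
  rw [h, can_t3 ξ]


lemma gval12 : gg ξ ⇑pm12 = ξ.trace * (ξ*ξ*ξ).trace := by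
  have h := gg_conj ξ ⟨![0,2,1,3], ![0,2,1,3], by decide, by decide⟩ ![1,2,0,3]
  rw [show ((⟨![0,2,1,3], ![0,2,1,3], by decide, by decide⟩ : Equiv.Perm (Fin 4)) : Fin 4 → Fin 4) ∘ (![1,2,0,3] : Fin 4 → Fin 4) ∘ ⇑(⟨![0,2,1,3], ![0,2,1,3], by decide, by decide⟩ : Equiv.Perm (Fin 4)).symm = ⇑pm12 from by funext i; fin_cases i <;> rfl] at h
  rw [h, can_t3 ξ]


lemma gval13 : gg ξ ⇑pm13 = (ξ*ξ*ξ*ξ).trace := by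
  have h := gg_conj ξ ⟨![0,2,3,1], ![0,3,1,2], by decide, by decide⟩ ![1,2,3,0]
  rw [show ((⟨![0,2,3,1], ![0,3,1,2], by decide, by decide⟩ : Equiv.Perm (Fin 4)) : Fin 4 → Fin 4) ∘ (![1,2,3,0] : Fin 4 → Fin 4) ∘ ⇑(⟨![0,2,3,1], ![0,3,1,2], by decide, by decide⟩ : Equiv.Perm (Fin 4)).symm = ⇑pm13 from by funext i; fin_cases i <;> rfl] at h
  rw [h, can_t4 ξ]


lemma gval14 : gg ξ ⇑pm14 = ξ.trace * ξ.trace * (ξ*ξ).trace := by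
  have h := gg_conj ξ ⟨![0,2,1,3], ![0,2,1,3], by decide, by decide⟩ ![1,0,2,3]
  rw [show ((⟨![0,2,1,3], ![0,2,1,3], by decide, by decide⟩ : Equiv.Perm (Fin 4)) : Fin 4 → Fin 4) ∘ (![1,0,2,3] : Fin 4 → Fin 4) ∘ ⇑(⟨![0,2,1,3], ![0,2,1,3], by decide, by decide⟩ : Equiv.Perm (Fin 4)).symm = ⇑pm14 from by funext i; fin_cases i <;> rfl] at h
  rw [h, can_t2 ξ]


lemma gval15 : gg ξ ⇑pm15 = ξ.trace * (ξ*ξ*ξ).trace := by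
  have h := gg_conj ξ ⟨![0,2,3,1], ![0,3,1,2], by decide, by decide⟩ ![1,2,0,3]
  rw [show ((⟨![0,2,3,1], ![0,3,1,2], by decide, by decide⟩ : Equiv.Perm (Fin 4)) : Fin 4 → Fin 4) ∘ (![1,2,0,3] : Fin 4 → Fin 4) ∘ ⇑(⟨![0,2,3,1], ![0,3,1,2], by decide, by decide⟩ : Equiv.Perm (Fin 4)).symm = ⇑pm15 from by funext i; fin_cases i <;> rfl] at h
  rw [h, can_t3 ξ]


lemma gval16 : gg ξ ⇑pm16 = (ξ*ξ).trace * (ξ*ξ).trace := by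
  have h := gg_conj ξ ⟨![0,2,1,3], ![0,2,1,3], by decide, by decide⟩ ![1,0,3,2]
  rw [show ((⟨![0,2,1,3], ![0,2,1,3], by decide, by decide⟩ : Equiv.Perm (Fin 4)) : Fin 4 → Fin 4) ∘ (![1,0,3,2] : Fin 4 → Fin 4) ∘ ⇑(⟨![0,2,1,3], ![0,2,1,3], by decide, by decide⟩ : Equiv.Perm (Fin 4)).symm = ⇑pm16 from by funext i; fin_cases i <;> rfl] at h
  rw [h, can_t22 ξ]


lemma gval17 : gg ξ ⇑pm17 = (ξ*ξ*ξ*ξ).trace := by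
  have h := gg_conj ξ ⟨![0,2,1,3], ![0,2,1,3], by decide, by decide⟩ ![1,2,3,0]
  rw [show ((⟨![0,2,1,3], ![0,2,1,3], by decide, by decide⟩ : Equiv.Perm (Fin 4)) : Fin 4 → Fin 4) ∘ (![1,2,3,0] : Fin 4 → Fin 4) ∘ ⇑(⟨![0,2,1,3], ![0,2,1,3], by decide, by decide⟩ : Equiv.Perm (Fin 4)).symm = ⇑pm17 from by funext i; fin_cases i <;> rfl] at h
  rw [h, can_t4 ξ]


lemma gval18 : gg ξ ⇑pm18 = (ξ*ξ*ξ*ξ).trace := by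
  have h := gg_conj ξ ⟨![0,3,2,1], ![0,3,2,1], by decide, by decide⟩ ![1,2,3,0]
  rw [show ((⟨![0,3,2,1], ![0,3,2,1], by decide, by decide⟩ : Equiv.Perm (Fin 4)) : Fin 4 → Fin 4) ∘ (![1,2,3,0] : Fin 4 → Fin 4) ∘ ⇑(⟨![0,3,2,1], ![0,3,2,1], by decide, by decide⟩ : Equiv.Perm (Fin 4)).symm = ⇑pm18 from by funext i; fin_cases i <;> rfl] at h
  rw [h, can_t4 ξ]


lemma gval19 : gg ξ ⇑pm19 = ξ.trace * (ξ*ξ*ξ).trace := by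
  have h := gg_conj ξ ⟨![0,3,1,2], ![0,2,3,1], by decide, by decide⟩ ![1,2,0,3]
  rw [show ((⟨![0,3,1,2], ![0,2,3,1], by decide, by decide⟩ : Equiv.Perm (Fin 4)) : Fin 4 → Fin 4) ∘ (![1,2,0,3] : Fin 4 → Fin 4) ∘ ⇑(⟨![0,3,1,2], ![0,2,3,1], by decide, by decide⟩ : Equiv.Perm (Fin 4)).symm = ⇑pm19 from by funext i; fin_cases i <;> rfl] at h
  rw [h, can_t3 ξ]


lemma gval20 : gg ξ ⇑pm20 = ξ.trace * (ξ*ξ*ξ).trace := by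
  have h := gg_conj ξ ⟨![0,3,2,1], ![0,3,2,1], by decide, by decide⟩ ![1,2,0,3]
  rw [show ((⟨![0,3,2,1], ![0,3,2,1], by decide, by decide⟩ : Equiv.Perm (Fin 4)) : Fin 4 → Fin 4) ∘ (![1,2,0,3] : Fin 4 → Fin 4) ∘ ⇑(⟨![0,3,2,1], ![0,3,2,1], by decide, by decide⟩ : Equiv.Perm (Fin 4)).symm = ⇑pm20 from by funext i; fin_cases i <;> rfl] at h
  rw [h, can_t3 ξ]


lemma gval21 : gg ξ ⇑pm21 = ξ.trace * ξ.trace * (ξ*ξ).trace := by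
  have h := gg_conj ξ ⟨![0,3,1,2], ![0,2,3,1], by decide, by decide⟩ ![1,0,2,3]
  rw [show ((⟨![0,3,1,2], ![0,2,3,1], by decide, by decide⟩ : Equiv.Perm (Fin 4)) : Fin 4 → Fin 4) ∘ (![1,0,2,3] : Fin 4 → Fin 4) ∘ ⇑(⟨![0,3,1,2], ![0,2,3,1], by decide, by decide⟩ : Equiv.Perm (Fin 4)).symm = ⇑pm21 from by funext i; fin_cases i <;> rfl] at h
  rw [h, can_t2 ξ]


lemma gval22 : gg ξ ⇑pm22 = (ξ*ξ*ξ*ξ).trace := by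
  have h := gg_conj ξ ⟨![0,3,1,2], ![0,2,3,1], by decide, by decide⟩ ![1,2,3,0]
  rw [show ((⟨![0,3,1,2], ![0,2,3,1], by decide, by decide⟩ : Equiv.Perm (Fin 4)) : Fin 4 → Fin 4) ∘ (![1,2,3,0] : Fin 4 → Fin 4) ∘ ⇑(⟨![0,3,1,2], ![0,2,3,1], by decide, by decide⟩ : Equiv.Perm (Fin 4)).symm = ⇑pm22 from by funext i; fin_cases i <;> rfl] at h
  rw [h, can_t4 ξ]


lemma gval23 : gg ξ ⇑pm23 = (ξ*ξ).trace * (ξ*ξ).trace := by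
  have h := gg_conj ξ ⟨![0,3,1,2], ![0,2,3,1], by decide, by decide⟩ ![1,0,3,2]
  rw [show ((⟨![0,3,1,2], ![0,2,3,1], by decide, by decide⟩ : Equiv.Perm (Fin 4)) : Fin 4 → Fin 4) ∘ (![1,0,3,2] : Fin 4 → Fin 4) ∘ ⇑(⟨![0,3,1,2], ![0,2,3,1], by decide, by decide⟩ : Equiv.Perm (Fin 4)).symm = ⇑pm23 from by funext i; fin_cases i <;> rfl] at h
  rw [h, can_t22 ξ]

def pmList : List (Equiv.Perm (Fin 4)) := [pm0,pm1,pm2,pm3,pm4,pm5,pm6,pm7,pm8,pm9,pm10,pm11,pm12,pm13,pm14,pm15,pm16,pm17,pm18,pm19,pm20,pm21,pm22,pm23]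

lemma key_sum (hξ0 : ξ.trace = 0) :
    ∑ π : Equiv.Perm (Fin 4), gg ξ ⇑π
      = 3 * ((ξ*ξ).trace) ^ 2 + 6 * (ξ*ξ*ξ*ξ).trace := by
  rw [show (Finset.univ : Finset (Equiv.Perm (Fin 4))) = pmList.toFinset by decide,
    List.sum_toFinset _ (by decide)]
  simp only [pmList, List.map_cons, List.map_nil, List.sum_cons, List.sum_nil,
    gval0 ξ, gval1 ξ, gval2 ξ, gval3 ξ, gval4 ξ, gval5 ξ, gval6 ξ, gval7 ξ, gval8 ξ, gval9 ξ, gval10 ξ, gval11 ξ, gval12 ξ, gval13 ξ, gval14 ξ, gval15 ξ, gval16 ξ, gval17 ξ, gval18 ξ, gval19 ξ, gval20 ξ, gval21 ξ, gval22 ξ, gval23 ξ, hξ0]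
  ring

lemma herm_sq {d : ℕ} (ξ : Matrix (Fin d) (Fin d) ℂ) (hξ : ξ.IsHermitian) :
    (ξ * ξ).IsHermitian := by
  rw [Matrix.IsHermitian, Matrix.conjTranspose_mul, hξ]

lemma trace_sq_eq {d : ℕ} (ξ : Matrix (Fin d) (Fin d) ℂ) (hξ : ξ.IsHermitian) :
    (ξ * ξ).trace = ((∑ i, ∑ j, Complex.normSq (ξ i j) : ℝ) : ℂ) := by
  simp only [Matrix.trace, Matrix.diag, Matrix.mul_apply]
  push_cast
  refine Finset.sum_congr rfl fun i _ => Finset.sum_congr rfl fun j _ => ?_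
  have h : ξ j i = starRingEnd ℂ (ξ i j) := by
    conv_lhs => rw [← hξ]
    rfl
  rw [h, Complex.mul_conj]

lemma normSq_sq_le {d : ℕ} (ξ : Matrix (Fin d) (Fin d) ℂ) :
    (∑ i, ∑ j, Complex.normSq ((ξ * ξ) i j) : ℝ)
      ≤ (∑ i, ∑ j, Complex.normSq (ξ i j)) ^ 2 := by
  have step : ∀ i j, Complex.normSq ((ξ * ξ) i j)
      ≤ (∑ k, Complex.normSq (ξ i k)) * (∑ k, Complex.normSq (ξ k j)) := by
    intro i j
    have h1 : ‖(ξ * ξ) i j‖ ≤ ∑ k, ‖ξ i k‖ * ‖ξ k j‖ := by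
      rw [Matrix.mul_apply]
      refine (norm_sum_le _ _).trans ?_
      refine le_of_eq (Finset.sum_congr rfl fun k _ => ?_)
      exact norm_mul _ _
    have h2 : Complex.normSq ((ξ * ξ) i j) ≤ (∑ k, ‖ξ i k‖ * ‖ξ k j‖) ^ 2 := by
      rw [← Complex.sq_norm]
      exact pow_le_pow_left₀ (norm_nonneg _) h1 2
    refine h2.trans ?_
    have := Finset.sum_mul_sq_le_sq_mul_sq Finset.univ
      (fun k => ‖ξ i k‖) (fun k => ‖ξ k j‖)
    refine this.trans (le_of_eq ?_)
    congr 1 <;> exact Finset.sum_congr rfl fun k _ => (Complex.sq_norm _)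
  calc ∑ i, ∑ j, Complex.normSq ((ξ * ξ) i j)
      ≤ ∑ i, ∑ j, (∑ k, Complex.normSq (ξ i k)) * (∑ k, Complex.normSq (ξ k j)) := by
        refine Finset.sum_le_sum fun i _ => Finset.sum_le_sum fun j _ => step i j
    _ = (∑ i, ∑ k, Complex.normSq (ξ i k)) * (∑ j, ∑ k, Complex.normSq (ξ k j)) := by
        rw [← Finset.sum_mul_sum]
    _ = (∑ i, ∑ j, Complex.normSq (ξ i j)) ^ 2 := by
        rw [sq, Finset.sum_comm (γ := Fin d) (f := fun k j => Complex.normSq (ξ k j))]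


/-- For a weighted spherical 4-design `(p_k, P_k)` on `ℂ^d` and traceless Hermitian `ξ`,
the random variable `S` taking value `d·Tr(ξ P_k)` with probability `p_k` satisfies
`E[S⁴] = (d³/((d+1)(d+2)(d+3)))·(3 (Tr ξ²)² + 6 Tr ξ⁴) ≤ (d/(d+1))³·9 (Tr ξ²)²`. -/
theorem four_design_fourth_moment {d n : ℕ} (hd : 0 < d)
    (p : Fin n → ℝ) (hp : ∀ k, 0 ≤ p k) (hps : ∑ k, p k = 1)
    (P : Fin n → Matrix (Fin d) (Fin d) ℂ)
    (hherm : ∀ k, (P k).IsHermitian)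
    (hidem : ∀ k, P k * P k = P k)
    (hrank1 : ∀ k, (P k).trace = 1)
    (hdesign : ∑ k, (p k : ℂ) • tpow4 (P k)
      = (1 / ((d : ℂ) * (d + 1) * (d + 2) * (d + 3))) • ∑ π : Equiv.Perm (Fin 4), permOp d π)
    (ξ : Matrix (Fin d) (Fin d) ℂ) (hξ : ξ.IsHermitian) (hξ0 : ξ.trace = 0) :
    ∑ k, (p k : ℂ) * ((d : ℂ) * (ξ * P k).trace) ^ 4
        = ((d : ℂ) ^ 3 / ((d + 1) * (d + 2) * (d + 3)))
          * (3 * ((ξ * ξ).trace) ^ 2 + 6 * (ξ * ξ * ξ * ξ).trace)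
      ∧ ∑ k, (p k : ℂ) * ((d : ℂ) * (ξ * P k).trace) ^ 4
        ≤ ((d : ℂ) / (d + 1)) ^ 3 * 9 * ((ξ * ξ).trace) ^ 2 := by
  have h0 : (d:ℂ) ≠ 0 := Nat.cast_ne_zero.mpr hd.ne'
  have h1 : (d:ℂ) + 1 ≠ 0 := by
    exact_mod_cast (Nat.cast_ne_zero (R := ℂ)).mpr (by omega : d + 1 ≠ 0)
  have h2 : (d:ℂ) + 2 ≠ 0 := by
    exact_mod_cast (Nat.cast_ne_zero (R := ℂ)).mpr (by omega : d + 2 ≠ 0)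
  have h3 : (d:ℂ) + 3 ≠ 0 := by
    exact_mod_cast (Nat.cast_ne_zero (R := ℂ)).mpr (by omega : d + 3 ≠ 0)
  have heq : ∑ k, (p k : ℂ) * ((d : ℂ) * (ξ * P k).trace) ^ 4
      = ((d : ℂ) ^ 3 / ((d + 1) * (d + 2) * (d + 3)))
          * (3 * ((ξ * ξ).trace) ^ 2 + 6 * (ξ * ξ * ξ * ξ).trace) := by
    have hmain : ∑ k, (p k : ℂ) * ((d:ℂ) * (ξ * P k).trace) ^ 4
        = (d:ℂ)^4 * ((tpow4 ξ) * (∑ k, (p k : ℂ) • tpow4 (P k))).trace := by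
      rw [Matrix.mul_sum, Matrix.trace_sum, Finset.mul_sum]
      refine Finset.sum_congr rfl fun k _ => ?_
      rw [Matrix.mul_smul, Matrix.trace_smul, tpow4_mul, trace_tpow4, smul_eq_mul]
      ring
    rw [hmain, hdesign, Matrix.mul_smul, Matrix.trace_smul, Matrix.mul_sum, Matrix.trace_sum]
    simp_rw [trace_tpow4_perm]
    rw [key_sum ξ hξ0, smul_eq_mul]
    field_simp
  refine ⟨heq, ?_⟩
  rw [heq]
  set X : ℝ := ∑ i, ∑ j, Complex.normSq (ξ i j) with hXdef
  set Y : ℝ := ∑ i, ∑ j, Complex.normSq ((ξ * ξ) i j) with hYdef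
  have ht2 : (ξ * ξ).trace = (X : ℂ) := trace_sq_eq ξ hξ
  have ht4 : (ξ * ξ * ξ * ξ).trace = (Y : ℂ) := by
    rw [show ξ * ξ * ξ * ξ = (ξ * ξ) * (ξ * ξ) from by rw [mul_assoc, mul_assoc]]
    exact trace_sq_eq (ξ * ξ) (herm_sq ξ hξ)
  rw [ht2, ht4]
  have e1 : ((d:ℂ) ^ 3 / (((d:ℂ) + 1) * ((d:ℂ) + 2) * ((d:ℂ) + 3)))
        * (3 * (X:ℂ) ^ 2 + 6 * (Y:ℂ))
      = ((( (d:ℝ) ^ 3 / (((d:ℝ) + 1) * ((d:ℝ) + 2) * ((d:ℝ) + 3)))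
        * (3 * X ^ 2 + 6 * Y) : ℝ) : ℂ) := by push_cast; ring
  have e2 : ((d:ℂ) / ((d:ℂ) + 1)) ^ 3 * 9 * (X:ℂ) ^ 2
      = (((( (d:ℝ) / ((d:ℝ) + 1)) ^ 3 * 9 * X ^ 2) : ℝ) : ℂ) := by push_cast; ring
  rw [e1, e2, Complex.real_le_real]
  -- now a real inequality
  set r : ℝ := (d : ℝ) with hrdef
  have hr0 : 0 ≤ r := Nat.cast_nonneg d
  have hr1 : 0 < r + 1 := by linarith
  have hX : 0 ≤ X := Finset.sum_nonneg fun i _ => Finset.sum_nonneg fun j _ => Complex.normSq_nonneg _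
  have hY0 : 0 ≤ Y := Finset.sum_nonneg fun i _ => Finset.sum_nonneg fun j _ => Complex.normSq_nonneg _
  have hYX : Y ≤ X ^ 2 := normSq_sq_le ξ
  have step1 : r ^ 3 / ((r + 1) * (r + 2) * (r + 3)) * (3 * X ^ 2 + 6 * Y)
      ≤ r ^ 3 / ((r + 1) * (r + 2) * (r + 3)) * (9 * X ^ 2) := by
    refine mul_le_mul_of_nonneg_left (by nlinarith) ?_
    positivity
  refine step1.trans ?_
  have step2 : r ^ 3 / ((r + 1) * (r + 2) * (r + 3)) ≤ r ^ 3 / (r + 1) ^ 3 := by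
    refine div_le_div₀ (by positivity) le_rfl (by positivity) ?_
    nlinarith
  calc r ^ 3 / ((r + 1) * (r + 2) * (r + 3)) * (9 * X ^ 2)
      ≤ r ^ 3 / (r + 1) ^ 3 * (9 * X ^ 2) := by
        refine mul_le_mul_of_nonneg_right step2 (by positivity)
    _ = (r / (r + 1)) ^ 3 * 9 * X ^ 2 := by rw [div_pow]; ring
end

section
/- Let ξ be Hermitian on ℂ^{d_A} ⊗ ℂ^{d_B} with partial traces ξ_A = Tr_B ξ and ξ_B = Tr_A ξ, and define Y_B = Tr_A(ξ·(ξ_A ⊗ 𝟙_B)). Then Tr(Y_B²) ≤ Tr(ξ²)·Tr(ξ_A²). -/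
open Kronecker ComplexOrder

/-- Partial trace over the `B` system. -/
noncomputable def ptraceB {dA dB : ℕ} (ξ : Matrix (Fin dA × Fin dB) (Fin dA × Fin dB) ℂ) :
    Matrix (Fin dA) (Fin dA) ℂ :=
  fun i j => ∑ k, ξ (i, k) (j, k)

/-- Partial trace over the `A` system. -/
noncomputable def ptraceA {dA dB : ℕ} (ξ : Matrix (Fin dA × Fin dB) (Fin dA × Fin dB) ℂ) :
    Matrix (Fin dB) (Fin dB) ℂ :=
  fun i j => ∑ k, ξ (k, i) (k, j)

section Aux

variable {dA dB : ℕ} (ξ : Matrix (Fin dA × Fin dB) (Fin dA × Fin dB) ℂ)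

open Complex Matrix Finset

/-- Explicit formula for Y_B entries. -/
lemma YB_apply (i j : Fin dB) :
    ptraceA (ξ * (ptraceB ξ ⊗ₖ (1 : Matrix (Fin dB) (Fin dB) ℂ))) i j
      = ∑ k, ∑ l, ξ (k, i) (l, j) * ptraceB ξ l k := by
  simp only [ptraceA, Matrix.mul_apply, Matrix.kroneckerMap_apply, Fintype.sum_prod_type,
    Matrix.one_apply, mul_ite, mul_one, mul_zero, Finset.sum_ite_eq', Finset.mem_univ, if_true]

lemma ptraceB_herm (hξ : ξ.IsHermitian) : (ptraceB ξ).IsHermitian := by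
  ext i j
  simp only [Matrix.conjTranspose_apply, ptraceB, star_sum]
  exact Finset.sum_congr rfl fun k _ => (hξ.apply (i,k) (j,k)).symm ▸ rfl

lemma YB_herm (hξ : ξ.IsHermitian) :
    (ptraceA (ξ * (ptraceB ξ ⊗ₖ (1 : Matrix (Fin dB) (Fin dB) ℂ)))).IsHermitian := by
  have hA := ptraceB_herm ξ hξ
  ext i j
  rw [Matrix.conjTranspose_apply, YB_apply, YB_apply, star_sum]
  rw [Finset.sum_comm]
  refine Finset.sum_congr rfl fun k _ => ?_
  rw [star_sum]
  refine Finset.sum_congr rfl fun l _ => ?_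
  rw [star_mul']
  congr 1
  · exact congrFun (congrFun hξ (l, i)) (k, j)
  · exact congrFun (congrFun hA k) l

/-- trace of square of a Hermitian matrix is the sum of norm-squares of entries. -/
lemma trace_sq_herm {n : Type*} [Fintype n] (M : Matrix n n ℂ) (hM : M.IsHermitian) :
    (M * M).trace = ((∑ p : n × n, Complex.normSq (M p.1 p.2) : ℝ) : ℂ) := by
  rw [Matrix.trace, Fintype.sum_prod_type]
  push_cast
  simp only [Matrix.diag_apply, Matrix.mul_apply]
  refine Finset.sum_congr rfl fun i _ => Finset.sum_congr rfl fun j _ => ?_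
  rw [← hM.apply i j, Complex.star_def, Complex.normSq_conj, ← Complex.normSq_eq_conj_mul_self]

end Aux

/-- For Hermitian `ξ` on `ℂ^{d_A} ⊗ ℂ^{d_B}` and `Y_B = Tr_A(ξ·(ξ_A ⊗ 𝟙_B))`,
`Tr(Y_B²) ≤ Tr(ξ²)·Tr(ξ_A²)`. -/
theorem trace_YB_sq_le {dA dB : ℕ}
    (ξ : Matrix (Fin dA × Fin dB) (Fin dA × Fin dB) ℂ) (hξ : ξ.IsHermitian) :
    (ptraceA (ξ * (ptraceB ξ ⊗ₖ (1 : Matrix (Fin dB) (Fin dB) ℂ)))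
        * ptraceA (ξ * (ptraceB ξ ⊗ₖ (1 : Matrix (Fin dB) (Fin dB) ℂ)))).trace
      ≤ (ξ * ξ).trace * (ptraceB ξ * ptraceB ξ).trace := by
  classical
  set Y := ptraceA (ξ * (ptraceB ξ ⊗ₖ (1 : Matrix (Fin dB) (Fin dB) ℂ))) with hY
  have hA := ptraceB_herm ξ hξ
  have hYh : Y.IsHermitian := YB_herm ξ hξ
  set x : ℝ := ∑ p : (Fin dA × Fin dB) × (Fin dA × Fin dB), Complex.normSq (ξ p.1 p.2) with hx
  set a : ℝ := ∑ p : Fin dA × Fin dA, Complex.normSq (ptraceB ξ p.1 p.2) with ha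
  set y : ℝ := ∑ p : Fin dB × Fin dB, Complex.normSq (Y p.1 p.2) with hy
  have hxnn : 0 ≤ x := Finset.sum_nonneg fun _ _ => Complex.normSq_nonneg _
  have hann : 0 ≤ a := Finset.sum_nonneg fun _ _ => Complex.normSq_nonneg _
  have hynn : 0 ≤ y := Finset.sum_nonneg fun _ _ => Complex.normSq_nonneg _
  rw [trace_sq_herm Y hYh, trace_sq_herm ξ hξ, trace_sq_herm (ptraceB ξ) hA, ← hx, ← ha, ← hy,
    ← Complex.ofReal_mul]
  rw [Complex.real_le_real]
  -- key identity: y = ∑ ξ p q * (ξA ⊗ Y) q p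
  have hkey : (y : ℂ) = ∑ p : (Fin dA × Fin dB) × (Fin dA × Fin dB),
      ξ p.1 p.2 * ((ptraceB ξ ⊗ₖ Y) p.2 p.1) := by
    have step : ∀ i j : Fin dB, Y i j * Y j i = ((Complex.normSq (Y i j) : ℝ) : ℂ) := by
      intro i j
      rw [← hYh.apply j i, Complex.star_def, Complex.mul_conj]
    calc (y : ℂ) = ∑ ij : Fin dB × Fin dB, ((Complex.normSq (Y ij.1 ij.2) : ℝ) : ℂ) := by
          rw [hy]; push_cast; rfl
      _ = ∑ ij : Fin dB × Fin dB, Y ij.1 ij.2 * Y ij.2 ij.1 :=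
          Finset.sum_congr rfl fun ij _ => (step ij.1 ij.2).symm
      _ = ∑ ij : Fin dB × Fin dB,
            (∑ kl : Fin dA × Fin dA, ξ (kl.1, ij.1) (kl.2, ij.2) * ptraceB ξ kl.2 kl.1)
              * Y ij.2 ij.1 := by
          refine Finset.sum_congr rfl fun ij _ => ?_
          congr 1
          rw [Fintype.sum_prod_type, hY, YB_apply]
      _ = ∑ ij : Fin dB × Fin dB, ∑ kl : Fin dA × Fin dA,
            ξ (kl.1, ij.1) (kl.2, ij.2) * ptraceB ξ kl.2 kl.1 * Y ij.2 ij.1 := by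
          simp [Finset.sum_mul]
      _ = ∑ q : (Fin dB × Fin dB) × (Fin dA × Fin dA),
            ξ (q.2.1, q.1.1) (q.2.2, q.1.2) * ptraceB ξ q.2.2 q.2.1 * Y q.1.2 q.1.1 := by
          conv_rhs => rw [Fintype.sum_prod_type]
      _ = _ := by
          refine Fintype.sum_equiv
            ⟨fun q => ((q.2.1, q.1.1), (q.2.2, q.1.2)),
             fun p => ((p.1.2, p.2.2), (p.1.1, p.2.1)),
             fun q => rfl, fun p => rfl⟩ _ _ fun q => ?_
          simp only [Equiv.coe_fn_mk, Matrix.kroneckerMap_apply]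
          ring
  -- Cauchy-Schwarz step
  have habs : y ≤ ∑ p : (Fin dA × Fin dB) × (Fin dA × Fin dB),
      ‖ξ p.1 p.2‖ * ‖(ptraceB ξ ⊗ₖ Y) p.2 p.1‖ := by
    calc y = ‖(y : ℂ)‖ := by rw [Complex.norm_real, Real.norm_of_nonneg hynn]
      _ = ‖∑ p : (Fin dA × Fin dB) × (Fin dA × Fin dB),
            ξ p.1 p.2 * ((ptraceB ξ ⊗ₖ Y) p.2 p.1)‖ := by rw [hkey]
      _ ≤ ∑ p : (Fin dA × Fin dB) × (Fin dA × Fin dB),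
            ‖ξ p.1 p.2 * ((ptraceB ξ ⊗ₖ Y) p.2 p.1)‖ :=
          norm_sum_le _ _
      _ = _ := Finset.sum_congr rfl fun p _ => norm_mul _ _
  have hCS := Finset.sum_mul_sq_le_sq_mul_sq Finset.univ
      (fun p : (Fin dA × Fin dB) × (Fin dA × Fin dB) => ‖ξ p.1 p.2‖)
      (fun p : (Fin dA × Fin dB) × (Fin dA × Fin dB) =>
        ‖(ptraceB ξ ⊗ₖ Y) p.2 p.1‖)
  have hsum1 : ∑ p : (Fin dA × Fin dB) × (Fin dA × Fin dB),
      ‖ξ p.1 p.2‖ ^ 2 = x := by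
    rw [hx]; exact Finset.sum_congr rfl fun p _ => Complex.sq_norm _
  have hsum2 : ∑ p : (Fin dA × Fin dB) × (Fin dA × Fin dB),
      ‖(ptraceB ξ ⊗ₖ Y) p.2 p.1‖ ^ 2 = a * y := by
    have e2 : a * y = ∑ q : (Fin dA × Fin dA) × (Fin dB × Fin dB),
        Complex.normSq (ptraceB ξ q.1.1 q.1.2) * Complex.normSq (Y q.2.1 q.2.2) := by
      rw [ha, hy, Finset.sum_mul_sum]
      conv_rhs => rw [Fintype.sum_prod_type]
    rw [e2]
    refine Fintype.sum_equiv
      ⟨fun p => ((p.2.1, p.1.1), (p.2.2, p.1.2)),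
       fun q => ((q.1.2, q.2.2), (q.1.1, q.2.1)),
       fun p => rfl, fun q => rfl⟩ _ _ fun p => ?_
    simp only [Equiv.coe_fn_mk, Matrix.kroneckerMap_apply, Complex.sq_norm, Complex.normSq_mul]
  have hsq : y ^ 2 ≤ x * (a * y) := by
    calc y ^ 2 ≤ (∑ p : (Fin dA × Fin dB) × (Fin dA × Fin dB),
          ‖ξ p.1 p.2‖ * ‖(ptraceB ξ ⊗ₖ Y) p.2 p.1‖) ^ 2 :=
          pow_le_pow_left₀ hynn habs 2
      _ ≤ x * (a * y) := by rw [← hsum1, ← hsum2]; exact hCS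
  rcases eq_or_lt_of_le hynn with h0 | h0
  · rw [← h0]; exact mul_nonneg hxnn hann
  · have h2 : y * y ≤ (x * a) * y := by nlinarith [hsq]
    exact le_of_mul_le_mul_right h2 h0
end

section
/- Let ξ be Hermitian on ℂ^{d_A} ⊗ ℂ^{d_B}. Then Tr(ξ²·(ξ_A ⊗ ξ_B)) ≤ Tr(ξ²)·√(Tr(ξ_A²)·Tr(ξ_B²)) ≤ (1/2)·Tr(ξ²)·(Tr(ξ_A²) + Tr(ξ_B²)), where ξ_A = Tr_B ξ, ξ_B = Tr_A ξ. -/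
open Kronecker Matrix

attribute [local instance] Matrix.frobeniusSeminormedAddCommGroup

lemma frob_norm_eq_euclid {n : Type*} [Fintype n] (X : Matrix n n ℂ)
    (x : EuclideanSpace ℂ (n × n)) (hx : ∀ p, x p = X p.1 p.2) : ‖X‖ = ‖x‖ := by
  conv_rhs => rw [EuclideanSpace.norm_eq]
  rw [Matrix.frobenius_norm_def, Real.sqrt_eq_rpow, Fintype.sum_prod_type]
  simp only [hx]
  norm_num [Real.rpow_natCast]

lemma trace_conjTranspose_mul_re_le {n : Type*} [Fintype n] (X Y : Matrix n n ℂ) :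
    (Xᴴ * Y).trace.re ≤ ‖X‖ * ‖Y‖ := by
  set x : EuclideanSpace ℂ (n × n) := WithLp.toLp 2 (fun p : n × n => X p.1 p.2) with hx
  set y : EuclideanSpace ℂ (n × n) := WithLp.toLp 2 (fun p : n × n => Y p.1 p.2) with hy
  have h1 : (Xᴴ * Y).trace = inner ℂ x y := by
    simp only [Matrix.trace, Matrix.diag, Matrix.mul_apply, Matrix.conjTranspose_apply,
      PiLp.inner_apply, RCLike.inner_apply, Fintype.sum_prod_type]
    rw [Finset.sum_comm]
    exact Finset.sum_congr rfl fun _ _ => Finset.sum_congr rfl fun _ _ => mul_comm _ _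
  calc (Xᴴ * Y).trace.re = (inner ℂ x y : ℂ).re := by rw [h1]
    _ ≤ ‖(inner ℂ x y : ℂ)‖ := Complex.re_le_norm _
    _ ≤ ‖x‖ * ‖y‖ := norm_inner_le_norm x y
    _ = ‖X‖ * ‖Y‖ := by
        rw [frob_norm_eq_euclid X x (fun p => rfl), frob_norm_eq_euclid Y y (fun p => rfl)]

lemma trace_conjTranspose_mul_self' {n : Type*} [Fintype n] (X : Matrix n n ℂ) :
    (Xᴴ * X).trace = ((‖X‖ ^ 2 : ℝ) : ℂ) := by
  have h : ‖X‖ ^ 2 = ∑ i, ∑ j, ‖X j i‖ ^ 2 := by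
    rw [Matrix.frobenius_norm_def, ← Real.rpow_natCast _ 2, ← Real.rpow_mul (by positivity)]
    norm_num [Real.rpow_natCast]
    exact Finset.sum_comm
  rw [h]
  simp only [Matrix.trace, Matrix.diag, Matrix.mul_apply, Matrix.conjTranspose_apply]
  push_cast
  congr 1; ext i; congr 1; ext j
  rw [show (star (X j i)) = (starRingEnd ℂ) (X j i) from rfl, ← Complex.normSq_eq_conj_mul_self,
    Complex.normSq_eq_norm_sq]
  norm_num


/-- For Hermitian `ξ` on `ℂ^{d_A} ⊗ ℂ^{d_B}`:
`Tr(ξ²(ξ_A ⊗ ξ_B)) ≤ Tr(ξ²)·√(Tr ξ_A² · Tr ξ_B²) ≤ (1/2)·Tr(ξ²)·(Tr ξ_A² + Tr ξ_B²)`. -/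
theorem trace_xi_sq_kron_bound {dA dB : ℕ}
    (ξ : Matrix (Fin dA × Fin dB) (Fin dA × Fin dB) ℂ) (hξ : ξ.IsHermitian) :
    ((ξ * ξ * (ptraceB ξ ⊗ₖ ptraceA ξ)).trace).re
        ≤ ((ξ * ξ).trace).re
          * Real.sqrt (((ptraceB ξ * ptraceB ξ).trace).re
              * ((ptraceA ξ * ptraceA ξ).trace).re)
      ∧ ((ξ * ξ).trace).re
          * Real.sqrt (((ptraceB ξ * ptraceB ξ).trace).re
              * ((ptraceA ξ * ptraceA ξ).trace).re)
        ≤ (1 / 2 : ℝ) * ((ξ * ξ).trace).re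
          * (((ptraceB ξ * ptraceB ξ).trace).re + ((ptraceA ξ * ptraceA ξ).trace).re) := by
  set A := ptraceB ξ with hAdef
  set B := ptraceA ξ with hBdef
  have hA : A.IsHermitian := Matrix.IsHermitian.ext fun i j => by
    show star (∑ k, ξ (j, k) (i, k)) = ∑ k, ξ (i, k) (j, k)
    rw [star_sum]
    exact Finset.sum_congr rfl fun k _ => hξ.apply (i, k) (j, k)
  have hB : B.IsHermitian := Matrix.IsHermitian.ext fun i j => by
    show star (∑ k, ξ (k, j) (k, i)) = ∑ k, ξ (k, i) (k, j)
    rw [star_sum]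
    exact Finset.sum_congr rfl fun k _ => hξ.apply (k, i) (k, j)
  have hM : (A ⊗ₖ B).IsHermitian := Matrix.IsHermitian.ext fun p q => by
    obtain ⟨p1, p2⟩ := p; obtain ⟨q1, q2⟩ := q
    show star (A q1 p1 * B q2 p2) = A p1 q1 * B p2 q2
    rw [star_mul', hA.apply, hB.apply]
  -- trace identities
  have ha : (A * A).trace = ((‖A‖ ^ 2 : ℝ) : ℂ) := by
    rw [← trace_conjTranspose_mul_self' A, hA.eq]
  have hb : (B * B).trace = ((‖B‖ ^ 2 : ℝ) : ℂ) := by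
    rw [← trace_conjTranspose_mul_self' B, hB.eq]
  have ht : (ξ * ξ).trace = ((‖ξ‖ ^ 2 : ℝ) : ℂ) := by
    rw [← trace_conjTranspose_mul_self' ξ, hξ.eq]
  have hm : ((A ⊗ₖ B) * (A ⊗ₖ B)).trace = ((‖A ⊗ₖ B‖ ^ 2 : ℝ) : ℂ) := by
    rw [← trace_conjTranspose_mul_self' (A ⊗ₖ B), hM.eq]
  have hmk : ((A ⊗ₖ B) * (A ⊗ₖ B)).trace = (A * A).trace * (B * B).trace := by
    rw [← Matrix.mul_kronecker_mul, Matrix.trace_kronecker]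
  have hMnorm : ‖A ⊗ₖ B‖ = ‖A‖ * ‖B‖ := by
    have h2 : ‖A ⊗ₖ B‖ ^ 2 = (‖A‖ * ‖B‖) ^ 2 := by
      have := hmk
      rw [hm, ha, hb, ← Complex.ofReal_mul] at this
      rw [Complex.ofReal_inj] at this
      rw [this]; ring
    have := congrArg Real.sqrt h2
    rwa [Real.sqrt_sq (norm_nonneg _), Real.sqrt_sq (by positivity)] at this
  have hare : (A * A).trace.re = ‖A‖ ^ 2 := by rw [ha]; exact Complex.ofReal_re _
  have hbre : (B * B).trace.re = ‖B‖ ^ 2 := by rw [hb]; exact Complex.ofReal_re _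
  have htre : (ξ * ξ).trace.re = ‖ξ‖ ^ 2 := by rw [ht]; exact Complex.ofReal_re _
  have hsqrt : Real.sqrt ((A * A).trace.re * (B * B).trace.re) = ‖A‖ * ‖B‖ := by
    rw [hare, hbre, ← mul_pow, Real.sqrt_sq (by positivity)]
  constructor
  · rw [hsqrt, htre]
    calc (ξ * ξ * (A ⊗ₖ B)).trace.re = (ξᴴ * (ξ * (A ⊗ₖ B))).trace.re := by
          rw [hξ.eq, mul_assoc]
      _ ≤ ‖ξ‖ * ‖ξ * (A ⊗ₖ B)‖ := trace_conjTranspose_mul_re_le _ _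
      _ ≤ ‖ξ‖ * (‖ξ‖ * ‖A ⊗ₖ B‖) :=
          mul_le_mul_of_nonneg_left (Matrix.frobenius_norm_mul _ _) (norm_nonneg _)
      _ = ‖ξ‖ ^ 2 * (‖A‖ * ‖B‖) := by rw [← hMnorm]; ring
  · rw [hsqrt, htre, hare, hbre]
    nlinarith [sq_nonneg (‖A‖ - ‖B‖), sq_nonneg ‖ξ‖, norm_nonneg A, norm_nonneg B]
end

section
/- Let σ = (𝟙 + F)/(d(d+1)) and α = (𝟙 − F)/(d(d−1)) be the normalized projectors onto the symmetric and antisymmetric subspaces of ℂ^d ⊗ ℂ^d (d ≥ 2), where F is the swap. For any Hermitian M on ℂ^d ⊗ ℂ^d with 0 ≤ M ≤ 𝟙 whose partial transpose satisfies 0 ≤ M^Γ ≤ 𝟙, one has |Tr((σ − α)M)| ≤ 2/(d+1). -/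
open ComplexOrder
open scoped Matrix

/-- The swap operator `F` on `ℂ^d ⊗ ℂ^d`. -/
noncomputable def swapOp (d : ℕ) : Matrix (Fin d × Fin d) (Fin d × Fin d) ℂ :=
  fun p q => if p.1 = q.2 ∧ p.2 = q.1 then 1 else 0

/-- The partial transpose on the second tensor factor (in the computational basis). -/
noncomputable def ptransposeB {d : ℕ}
    (M : Matrix (Fin d × Fin d) (Fin d × Fin d) ℂ) :
    Matrix (Fin d × Fin d) (Fin d × Fin d) ℂ :=
  fun p q => M (p.1, q.2) (q.1, p.2)

noncomputable def diagProj (d : ℕ) : Matrix (Fin d × Fin d) (Fin d × Fin d) ℂ :=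
  fun p q => if p.1 = p.2 ∧ q.1 = q.2 then 1 else 0

lemma psd_trace_nonneg {n : Type*} [Fintype n] [DecidableEq n]
    {N : Matrix n n ℂ} (hN : N.PosSemidef) : 0 ≤ N.trace := by
  refine Finset.sum_nonneg fun i _ => ?_
  exact hN.diag_nonneg

open scoped MatrixOrder in
lemma trace_mul_psd {n : Type*} [Fintype n] [DecidableEq n] {A B : Matrix n n ℂ}
    (hA : A.PosSemidef) (hB : B.PosSemidef) : 0 ≤ (A * B).trace := by
  have hps : (CFC.sqrt A * B * CFC.sqrt A).PosSemidef := by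
    have := hB.mul_mul_conjTranspose_same (CFC.sqrt A)
    rwa [(Matrix.nonneg_iff_posSemidef.mp (CFC.sqrt_nonneg A)).isHermitian.eq] at this
  calc (0:ℂ) ≤ (CFC.sqrt A * B * CFC.sqrt A).trace := psd_trace_nonneg hps
  _ = (A*B).trace := by
      rw [Matrix.trace_mul_cycle, CFC.sqrt_mul_sqrt_self A hA.nonneg]

lemma swap_mul_swap (d : ℕ) : swapOp d * swapOp d = 1 := by
  ext p q
  rw [Matrix.mul_apply, Finset.sum_eq_single (p.2, p.1)]
  · simp [swapOp, Matrix.one_apply, Prod.ext_iff, and_comm, eq_comm]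
  · intro r _ hr
    have : ¬(p.1 = r.2 ∧ p.2 = r.1) := by
      rintro ⟨h1, h2⟩; exact hr (Prod.ext h2.symm h1.symm)
    simp [swapOp, this]
  · intro h; exact absurd (Finset.mem_univ _) h

lemma swap_herm (d : ℕ) : (swapOp d)ᴴ = swapOp d := by
  ext p q
  simp only [Matrix.conjTranspose_apply, swapOp]
  split_ifs with h1 h2 h2
  · simp
  · exact (h2 ⟨h1.2.symm, h1.1.symm⟩).elim
  · exact (h1 ⟨h2.2.symm, h2.1.symm⟩).elim
  · simp

lemma diagProj_herm (d : ℕ) : (diagProj d)ᴴ = diagProj d := by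
  ext p q
  simp only [Matrix.conjTranspose_apply, diagProj]
  split_ifs with h1 h2 h2
  · simp
  · exact (h2 ⟨h1.2, h1.1⟩).elim
  · exact (h1 ⟨h2.2, h2.1⟩).elim
  · simp

lemma sum_diag (d : ℕ) : ∑ r : Fin d × Fin d, (if r.1 = r.2 then (1:ℂ) else 0) = d := by
  rw [Fintype.sum_prod_type]
  simp

lemma diagProj_mul_diagProj (d : ℕ) : diagProj d * diagProj d = (d : ℂ) • diagProj d := by
  ext p q
  rw [Matrix.mul_apply]
  simp only [diagProj, Matrix.smul_apply, smul_eq_mul]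
  have key : ∀ x : Fin d × Fin d, (if x.1 = x.2 then if x.1 = x.2 then (1:ℂ) else 0 else 0)
      = if x.1 = x.2 then 1 else 0 := fun x => by split_ifs <;> rfl
  by_cases h1 : p.1 = p.2 <;> by_cases h2 : q.1 = q.2 <;>
    simp [h1, h2, ite_and, key, sum_diag d]

lemma psd_of_sq {n : Type*} [Fintype n] [DecidableEq n] {G : Matrix n n ℂ} {c : ℝ}
    (hc : 0 < c) (hH : Gᴴ = G) (hsq : G * G = (c : ℂ) • G) : G.PosSemidef := by
  suffices h : ∃ B : Matrix n n ℂ, G = Bᴴ * B by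
    obtain ⟨B, hB⟩ := h; rw [hB]; exact Matrix.posSemidef_conjTranspose_mul_self B
  refine ⟨((Real.sqrt c : ℂ))⁻¹ • G, ?_⟩
  have h1 : star ((Real.sqrt c : ℂ))⁻¹ = ((Real.sqrt c : ℂ))⁻¹ := by
    rw [star_inv₀, Complex.star_def, Complex.conj_ofReal]
  rw [Matrix.conjTranspose_smul, hH, h1, Matrix.smul_mul, Matrix.mul_smul, smul_smul, hsq,
    smul_smul]
  have h2 : ((Real.sqrt c : ℂ))⁻¹ * ((Real.sqrt c : ℂ))⁻¹ * (c : ℂ) = 1 := by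
    rw [← mul_inv, ← Complex.ofReal_mul, Real.mul_self_sqrt hc.le]
    exact inv_mul_cancel₀ (by exact_mod_cast hc.ne')
  rw [h2, one_smul]

lemma one_sub_swap_psd {d : ℕ} : (1 - swapOp d).PosSemidef := by
  refine psd_of_sq (c := 2) two_pos ?_ ?_
  · rw [Matrix.conjTranspose_sub, Matrix.conjTranspose_one, swap_herm]
  · calc (1 - swapOp d) * (1 - swapOp d)
        = 1 - swapOp d - swapOp d + swapOp d * swapOp d := by noncomm_ring
    _ = ((2:ℝ):ℂ) • (1 - swapOp d) := by
        rw [swap_mul_swap, show ((2:ℝ):ℂ) = 2 from by norm_num, two_smul]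
        abel

lemma diagProj_psd {d : ℕ} (hd : 2 ≤ d) : (diagProj d).PosSemidef := by
  refine psd_of_sq (c := d) (by positivity) (diagProj_herm d) ?_
  rw [diagProj_mul_diagProj]; norm_num

lemma trace_swap (d : ℕ) : (swapOp d).trace = d := by
  rw [Matrix.trace]
  calc ∑ p : Fin d × Fin d, (swapOp d).diag p
      = ∑ p : Fin d × Fin d, (if p.1 = p.2 then (1:ℂ) else 0) := by
        refine Finset.sum_congr rfl fun p _ => ?_
        have hiff : (p.1 = p.2 ∧ p.2 = p.1) ↔ p.1 = p.2 := ⟨fun h => h.1, fun h => ⟨h, h.symm⟩⟩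
        simp [Matrix.diag, swapOp, hiff]
  _ = d := sum_diag d

lemma trace_diagProj (d : ℕ) : (diagProj d).trace = d := by
  rw [Matrix.trace]
  calc ∑ p : Fin d × Fin d, (diagProj d).diag p
      = ∑ p : Fin d × Fin d, (if p.1 = p.2 then (1:ℂ) else 0) := by
        refine Finset.sum_congr rfl fun p _ => ?_
        simp [Matrix.diag, diagProj, and_self]
  _ = d := sum_diag d

lemma trace_one' (d : ℕ) : (1 : Matrix (Fin d × Fin d) (Fin d × Fin d) ℂ).trace = (d:ℂ)*d := by
  rw [Matrix.trace_one]; norm_num [Fintype.card_prod]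

lemma trace_swap_mul {d : ℕ} (M : Matrix (Fin d × Fin d) (Fin d × Fin d) ℂ) :
    (swapOp d * M).trace = ∑ a : Fin d, ∑ b : Fin d, M (a, b) (b, a) := by
  rw [Matrix.trace]
  have h1 : ∀ p : Fin d × Fin d, (swapOp d * M) p p = M (p.2, p.1) p := by
    intro p
    rw [Matrix.mul_apply, Finset.sum_eq_single (p.2, p.1)]
    · simp [swapOp]
    · intro r _ hr
      have : ¬(p.1 = r.2 ∧ p.2 = r.1) := by
        rintro ⟨g1, g2⟩; exact hr (Prod.ext g2.symm g1.symm)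
      simp [swapOp, this]
    · intro h; exact absurd (Finset.mem_univ _) h
  calc ∑ p : Fin d × Fin d, (swapOp d * M).diag p
      = ∑ p : Fin d × Fin d, M (p.2, p.1) p := Finset.sum_congr rfl fun p _ => h1 p
  _ = ∑ b : Fin d, ∑ a : Fin d, M (a, b) (b, a) := by
        rw [Fintype.sum_prod_type]
  _ = ∑ a : Fin d, ∑ b : Fin d, M (a, b) (b, a) := Finset.sum_comm

lemma trace_diagProj_mul_pt {d : ℕ} (M : Matrix (Fin d × Fin d) (Fin d × Fin d) ℂ) :
    (diagProj d * ptransposeB M).trace = ∑ a : Fin d, ∑ b : Fin d, M (a, b) (b, a) := by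
  have h1 : ∀ p : Fin d × Fin d, (diagProj d * ptransposeB M) p p
      = if p.1 = p.2 then ∑ j : Fin d, M (j, p.2) (p.1, j) else 0 := by
    intro p
    rw [Matrix.mul_apply, Fintype.sum_prod_type]
    by_cases hp : p.1 = p.2
    · simp [diagProj, ptransposeB, hp, ite_and, Finset.sum_ite_eq, Finset.sum_ite_eq']
    · simp [diagProj, ptransposeB, hp]
  rw [Matrix.trace]
  calc ∑ p : Fin d × Fin d, (diagProj d * ptransposeB M).diag p
      = ∑ p : Fin d × Fin d, (if p.1 = p.2 then ∑ j : Fin d, M (j, p.2) (p.1, j) else 0) :=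
        Finset.sum_congr rfl fun p _ => h1 p
  _ = ∑ i : Fin d, ∑ j : Fin d, M (j, i) (i, j) := by
        rw [Fintype.sum_prod_type]
        simp [Finset.sum_ite_eq]
  _ = ∑ a : Fin d, ∑ b : Fin d, M (a, b) (b, a) := Finset.sum_comm

/-- Data hiding: for the normalized projectors `σ = (𝟙+F)/(d(d+1))` and
`α = (𝟙−F)/(d(d−1))` onto the symmetric and antisymmetric subspaces, any two-outcome
PPT measurement operator `0 ≤ M ≤ 𝟙` with `0 ≤ M^Γ ≤ 𝟙` satisfies
`|Tr((σ − α)M)| ≤ 2/(d+1)`. -/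
theorem ppt_data_hiding {d : ℕ} (hd : 2 ≤ d)
    (M : Matrix (Fin d × Fin d) (Fin d × Fin d) ℂ)
    (hM : M.PosSemidef)
    (hM1 : ((1 : Matrix (Fin d × Fin d) (Fin d × Fin d) ℂ) - M).PosSemidef)
    (hMpt : (ptransposeB M).PosSemidef)
    (hMpt1 : ((1 : Matrix (Fin d × Fin d) (Fin d × Fin d) ℂ) - ptransposeB M).PosSemidef) :
    ‖
        (((((1 / ((d : ℂ) * (d + 1))) • (1 + swapOp d))
            - ((1 / ((d : ℂ) * (d - 1))) • (1 - swapOp d))) * M).trace)‖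
      ≤ 2 / (d + 1 : ℝ) := by
  set t := M.trace with ht_def
  set s := (swapOp d * M).trace with hs_def
  -- complex inequalities
  have ca : (0:ℂ) ≤ t - s := by
    have h := trace_mul_psd one_sub_swap_psd hM
    rwa [Matrix.sub_mul, Matrix.one_mul, Matrix.trace_sub] at h
  have cc : (0:ℂ) ≤ t := psd_trace_nonneg hM
  have cb : (0:ℂ) ≤ (d:ℂ)*d - t := by
    have h := psd_trace_nonneg hM1
    rwa [Matrix.trace_sub, trace_one'] at h
  have cd : (0:ℂ) ≤ s := by
    have h := trace_mul_psd (diagProj_psd hd) hMpt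
    rwa [trace_diagProj_mul_pt, ← trace_swap_mul] at h
  have ce : (0:ℂ) ≤ (d:ℂ) - s := by
    have h := trace_mul_psd (diagProj_psd hd) hMpt1
    rwa [Matrix.mul_sub, Matrix.mul_one, Matrix.trace_sub, trace_diagProj,
      trace_diagProj_mul_pt, ← trace_swap_mul] at h
  have cf : (0:ℂ) ≤ ((d:ℂ)*d - d) - (t - s) := by
    have h := trace_mul_psd one_sub_swap_psd hM1
    rw [Matrix.mul_sub, Matrix.mul_one, Matrix.trace_sub] at h
    rw [Matrix.trace_sub, trace_one', trace_swap] at h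
    rwa [Matrix.sub_mul, Matrix.one_mul, Matrix.trace_sub] at h
  -- real data
  set dR := (d:ℝ) with hdR
  have hd2 : (2:ℝ) ≤ dR := by rw [hdR]; exact_mod_cast hd
  have him_t : t.im = 0 := ((Complex.le_def.mp cc).2).symm
  have him_s : s.im = 0 := by
    have h := ((Complex.le_def.mp ca).2).symm
    simp only [Complex.sub_im, Complex.zero_im] at h
    linarith [h, him_t]
  set tR := t.re with htR
  set sR := s.re with hsR
  have hre : ∀ z w : ℂ, (0:ℂ) ≤ z - w → w.re ≤ z.re := by
    intro z w h
    have := (Complex.le_def.mp h).1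
    simp only [Complex.sub_re, Complex.zero_re] at this
    linarith
  have hdd_re : ((d:ℂ)*d).re = dR * dR := by simp [Complex.mul_re, hdR]
  have r1 : 0 ≤ tR := by simpa using (Complex.le_def.mp cc).1
  have r3 : 0 ≤ sR := by simpa using (Complex.le_def.mp cd).1
  have r5 : sR ≤ tR := hre t s ca
  have r2 : tR ≤ dR * dR := by
    have := hre ((d:ℂ)*d) t cb; rwa [hdd_re] at this
  have r4 : sR ≤ dR := by
    have := hre (d:ℂ) s ce; simpa using this
  have r6 : tR - sR ≤ dR * dR - dR := by
    have := hre ((d:ℂ)*d - d) (t - s) cf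
    simp only [Complex.sub_re, Complex.natCast_re, hdd_re] at this
    linarith
  -- rewrite the trace
  have ht' : t = (tR : ℂ) := Complex.ext (by simp [htR]) (by simp [him_t])
  have hs' : s = (sR : ℂ) := Complex.ext (by simp [hsR]) (by simp [him_s])
  have hz : ((((1 / ((d : ℂ) * (d + 1))) • (1 + swapOp d))
            - ((1 / ((d : ℂ) * (d - 1))) • (1 - swapOp d))) * M).trace
      = ((1/(dR*(dR+1))*(tR+sR) - 1/(dR*(dR-1))*(tR-sR) : ℝ) : ℂ) := by
    rw [Matrix.sub_mul, Matrix.smul_mul, Matrix.smul_mul, Matrix.trace_sub,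
      Matrix.trace_smul, Matrix.trace_smul, Matrix.add_mul, Matrix.sub_mul,
      Matrix.one_mul, Matrix.trace_add, Matrix.trace_sub, ← ht_def, ← hs_def,
      ht', hs']
    rw [hdR]
    push_cast
    simp only [smul_eq_mul]
    try ring
  rw [hz, Complex.norm_real, Real.norm_eq_abs]
  -- real inequality
  have hden : (0:ℝ) < dR * (dR + 1) * (dR - 1) := by nlinarith
  have hne1 : dR ≠ 0 := by linarith
  have hne2 : dR + 1 ≠ 0 := by linarith
  have hne3 : dR - 1 ≠ 0 := by intro h; linarith [h]
  have hfR : 1/(dR*(dR+1))*(tR+sR) - 1/(dR*(dR-1))*(tR-sR)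
      = (2*dR*sR - 2*tR) / (dR*(dR+1)*(dR-1)) := by
    field_simp
    ring
  rw [hfR, abs_le]
  have hpos1 : (0:ℝ) < dR + 1 := by linarith
  constructor
  · rw [neg_le, ← neg_div, neg_sub]
    rw [div_le_div_iff₀ hden hpos1]
    have key2 : tR - dR*sR ≤ dR*dR - dR := by
      nlinarith [mul_nonneg (by linarith : (0:ℝ) ≤ dR - 1) r3]
    nlinarith [mul_le_mul_of_nonneg_right key2 (le_of_lt hpos1)]
  · rw [div_le_div_iff₀ hden hpos1]
    have key : dR*sR - tR ≤ dR*dR - dR := by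
      nlinarith [mul_nonneg (by linarith : (0:ℝ) ≤ dR - 1) (by linarith : (0:ℝ) ≤ dR - sR), r5]
    nlinarith [mul_le_mul_of_nonneg_right key (le_of_lt hpos1)]
end

section
/- Let ξ be a traceless Hermitian operator on ℂ^{d_A} ⊗ ℂ^{d_B} with D = d_A·d_B, and let S be the random variable D·Tr((|φ⟩⟨φ| ⊗ |ψ⟩⟨ψ|)ξ) where |φ⟩ and |ψ⟩ are independent Haar-uniform unit vectors in ℂ^{d_A} and ℂ^{d_B}. Then E[S²] = (d_A d_B / ((d_A+1)(d_B+1)))·(Tr(ξ²) + Tr(ξ_A²) + Tr(ξ_B²)), where ξ_A = Tr_B ξ and ξ_B = Tr_A ξ. -/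
open MeasureTheory Kronecker

/-- The rank-one projector `|φ⟩⟨φ|` onto a vector `φ ∈ ℂ^d`. -/
noncomputable def proj {d : ℕ} (φ : Fin d → ℂ) : Matrix (Fin d) (Fin d) ℂ :=
  Matrix.vecMulVec φ (star φ)

namespace IsoAux

variable {dA dB : ℕ}

/-- The `dB × dB` block of `ξ` labelled by a pair of `A`-indices. -/
def Bmat (ξ : Matrix (Fin dA × Fin dB) (Fin dA × Fin dB) ℂ) (p : Fin dA × Fin dA) :
    Matrix (Fin dB) (Fin dB) ℂ := Matrix.of fun k l => ξ (p.2, k) (p.1, l)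

section helpers
variable {M : Type*} [AddCommMonoid M] {α β γ δ : Type*} [Fintype α] [Fintype β] [Fintype γ]
  [Fintype δ]

lemma sum3_rot (f : α → β → γ → M) :
    ∑ a, ∑ b, ∑ c, f a b c = ∑ b, ∑ c, ∑ a, f a b c := by
  trans ∑ b, ∑ a, ∑ c, f a b c
  · rw [Finset.sum_comm]
  · exact Finset.sum_congr rfl fun b _ => by rw [Finset.sum_comm]

lemma sum_swap4 (f : α → β → γ → δ → M) :
    ∑ a, ∑ b, ∑ c, ∑ d, f a b c d = ∑ c, ∑ d, ∑ a, ∑ b, f a b c d := by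
  trans ∑ a, ∑ c, ∑ b, ∑ d, f a b c d
  · exact Finset.sum_congr rfl fun a _ => by rw [Finset.sum_comm]
  trans ∑ c, ∑ a, ∑ b, ∑ d, f a b c d
  · rw [Finset.sum_comm]
  refine Finset.sum_congr rfl fun c _ => ?_
  trans ∑ a, ∑ d, ∑ b, f a b c d
  · exact Finset.sum_congr rfl fun a _ => by rw [Finset.sum_comm]
  · rw [Finset.sum_comm]

end helpers

lemma trace_kron (u : Fin dA → ℂ) (v : Fin dB → ℂ)
    (ξ : Matrix (Fin dA × Fin dB) (Fin dA × Fin dB) ℂ) :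
    ((proj u ⊗ₖ proj v) * ξ).trace
      = ∑ p : Fin dA × Fin dA, proj u p.1 p.2 * (proj v * Bmat ξ p).trace := by
  simp only [Matrix.trace, Matrix.diag, Matrix.mul_apply, Matrix.kroneckerMap_apply,
    Fintype.sum_prod_type, Bmat, Matrix.of_apply, Finset.mul_sum]
  refine Finset.sum_congr rfl fun j _ => ?_
  rw [Finset.sum_comm]
  refine Finset.sum_congr rfl fun i _ => ?_
  refine Finset.sum_congr rfl fun l _ => ?_
  refine Finset.sum_congr rfl fun k _ => ?_
  ring

lemma proj_entry_trace {d : ℕ} (u : Fin d → ℂ) (a b : Fin d) :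
    proj u a b = (proj u * Matrix.single b a (1:ℂ)).trace := by
  simp [Matrix.trace, Matrix.diag, Matrix.mul_apply, Matrix.single, ite_and,
    Finset.sum_ite_eq, Finset.sum_ite_eq']

lemma coeff {d : ℕ} (p q : Fin d × Fin d) :
    (Matrix.single p.2 p.1 (1:ℂ)).trace * (Matrix.single q.2 q.1 (1:ℂ)).trace
        + (Matrix.single p.2 p.1 (1:ℂ) * Matrix.single q.2 q.1 (1:ℂ)).trace
      = (if p.1 = p.2 then 1 else 0) * (if q.1 = q.2 then 1 else 0)
        + (if q = (p.2, p.1) then 1 else 0) := by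
  obtain ⟨p1, p2⟩ := p
  obtain ⟨q1, q2⟩ := q
  simp only [Matrix.trace, Matrix.diag, Matrix.mul_apply, Matrix.single,
    Matrix.of_apply, ite_and, Prod.mk.injEq, Prod.ext_iff]
  simp [Finset.sum_ite_eq, Finset.sum_ite_eq', eq_comm, ite_and, mul_ite, ite_mul]

lemma sum_delta_traceB (ξ : Matrix (Fin dA × Fin dB) (Fin dA × Fin dB) ℂ) :
    ∑ p : Fin dA × Fin dA, (if p.1 = p.2 then (1:ℂ) else 0) * (Bmat ξ p).trace
      = ξ.trace := by
  simp only [Fintype.sum_prod_type, ite_mul, one_mul, zero_mul, Finset.sum_ite_eq,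
    Finset.mem_univ, if_true]
  simp [Matrix.trace, Matrix.diag, Bmat, Fintype.sum_prod_type]

lemma sum_S2 (ξ : Matrix (Fin dA × Fin dB) (Fin dA × Fin dB) ℂ) :
    ∑ p : Fin dA × Fin dA, ∑ q : Fin dA × Fin dA,
        ((if p.1 = p.2 then (1:ℂ) else 0) * (if q.1 = q.2 then 1 else 0))
          * (Bmat ξ p * Bmat ξ q).trace
      = (ptraceA ξ * ptraceA ξ).trace := by
  simp only [ite_mul, mul_ite, one_mul, zero_mul, mul_zero, Fintype.sum_prod_type,
    Finset.sum_ite_irrel, Finset.sum_const_zero, Finset.sum_ite_eq, Finset.mem_univ, if_true]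
  simp only [Matrix.trace, Matrix.diag, Matrix.mul_apply, Bmat, Matrix.of_apply, ptraceA,
    Finset.sum_mul, Finset.mul_sum]
  exact (sum_swap4 fun i i' k l => ξ (i,k) (i,l) * ξ (i',l) (i',k)).trans
    (Finset.sum_congr rfl fun k _ => Finset.sum_congr rfl fun l _ => by rw [Finset.sum_comm])

lemma sum_S3 (ξ : Matrix (Fin dA × Fin dB) (Fin dA × Fin dB) ℂ) :
    ∑ p : Fin dA × Fin dA, (Bmat ξ p).trace * (Bmat ξ (p.2, p.1)).trace
      = (ptraceB ξ * ptraceB ξ).trace := by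
  simp only [Fintype.sum_prod_type, Matrix.trace, Matrix.diag, Bmat, Matrix.of_apply,
    Matrix.mul_apply, ptraceB, Finset.sum_mul, Finset.mul_sum]
  rw [Finset.sum_comm]

lemma sum_S4 (ξ : Matrix (Fin dA × Fin dB) (Fin dA × Fin dB) ℂ) :
    ∑ p : Fin dA × Fin dA, (Bmat ξ p * Bmat ξ (p.2, p.1)).trace
      = (ξ * ξ).trace := by
  simp only [Fintype.sum_prod_type, Matrix.trace, Matrix.diag, Bmat, Matrix.of_apply,
    Matrix.mul_apply, Finset.sum_mul, Finset.mul_sum]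
  rw [sum3_rot]

lemma unit_norm_le_one {d : ℕ} (u : Fin d → ℂ)
    (h : ∑ i, (starRingEnd ℂ) (u i) * u i = 1) (i : Fin d) : ‖u i‖ ≤ 1 := by
  have h2 : ∑ j, Complex.normSq (u j) = 1 := by
    have h' : ∑ j, ((Complex.normSq (u j) : ℝ) : ℂ) = 1 := by
      rw [← h]
      exact Finset.sum_congr rfl fun j _ => Complex.normSq_eq_conj_mul_self
    exact_mod_cast h'
  have h3 : Complex.normSq (u i) ≤ 1 :=
    h2 ▸ Finset.single_le_sum (fun j _ => Complex.normSq_nonneg (u j)) (Finset.mem_univ i)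
  have h4 : ‖u i‖ ^ 2 ≤ 1 := by
    rw [← Complex.sq_norm] at h3
    simpa using h3
  nlinarith [norm_nonneg (u i)]

lemma trace_proj_expand {d : ℕ} (u : Fin d → ℂ) (M : Matrix (Fin d) (Fin d) ℂ) :
    (proj u * M).trace = ∑ a, ∑ b, u a * (starRingEnd ℂ) (u b) * M b a := by
  simp only [Matrix.trace, Matrix.diag, Matrix.mul_apply, proj, Matrix.vecMulVec_apply,
    Pi.star_apply, RCLike.star_def, Finset.sum_mul]

lemma trace_proj_bound {d : ℕ} (u : Fin d → ℂ) (hu : ∀ i, ‖u i‖ ≤ 1)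
    (M : Matrix (Fin d) (Fin d) ℂ) :
    ‖(proj u * M).trace‖ ≤ ∑ a, ∑ b, ‖M b a‖ := by
  rw [trace_proj_expand]
  refine (norm_sum_le _ _).trans (Finset.sum_le_sum fun a _ => (norm_sum_le _ _).trans
    (Finset.sum_le_sum fun b _ => ?_))
  rw [norm_mul, norm_mul, RCLike.norm_conj]
  have hab : ‖u a‖ * ‖u b‖ ≤ 1 := by
    simpa using mul_le_mul (hu a) (hu b) (norm_nonneg _) zero_le_one
  exact mul_le_of_le_one_left (norm_nonneg _) hab

lemma meas_trace_proj {d : ℕ} {Ω : Type*} [MeasurableSpace Ω] (φ : Ω → Fin d → ℂ)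
    (hm : Measurable φ) (M : Matrix (Fin d) (Fin d) ℂ) :
    Measurable (fun ω => (proj (φ ω) * M).trace) := by
  simp only [trace_proj_expand]
  exact Finset.measurable_sum _ fun a _ => Finset.measurable_sum _ fun b _ =>
    (((measurable_pi_apply a).comp hm).mul
      ((Complex.continuous_conj.measurable.comp ((measurable_pi_apply b).comp hm)))).mul
      measurable_const

lemma integrable_trace_mul {d : ℕ} {Ω : Type*} [MeasurableSpace Ω] (μ : Measure Ω)
    [IsProbabilityMeasure μ] (φ : Ω → Fin d → ℂ) (hm : Measurable φ)
    (hunit : ∀ ω, ∑ i, (starRingEnd ℂ) (φ ω i) * φ ω i = 1)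
    (M N : Matrix (Fin d) (Fin d) ℂ) :
    Integrable (fun ω => (proj (φ ω) * M).trace * (proj (φ ω) * N).trace) μ := by
  have hmeas := (meas_trace_proj φ hm M).mul (meas_trace_proj φ hm N)
  refine (integrable_const ((∑ a, ∑ b, ‖M b a‖) * (∑ a, ∑ b, ‖N b a‖))).mono'
    hmeas.aestronglyMeasurable (Filter.Eventually.of_forall fun ω => ?_)
  rw [norm_mul]
  have h1 := trace_proj_bound (φ ω) (unit_norm_le_one _ (hunit ω)) M
  have h2 := trace_proj_bound (φ ω) (unit_norm_le_one _ (hunit ω)) N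
  exact mul_le_mul h1 h2 (norm_nonneg _)
    (Finset.sum_nonneg fun a _ => Finset.sum_nonneg fun b _ => norm_nonneg _)

end IsoAux

open IsoAux in
/-- Second moment of the locally isotropic measurement on a bipartite system.
Here `φ` and `ψ` are independent Haar-uniform random unit vectors on `ℂ^{d_A}` and
`ℂ^{d_B}` (independence is expressed by the product measure, and the Haar second
moment property `E[|φ⟩⟨φ|^{⊗2}] = (𝟙+F)/(d(d+1))` is expressed in the equivalent
scalar form `E[Tr(|φ⟩⟨φ|M)·Tr(|φ⟩⟨φ|N)] = (Tr M Tr N + Tr(MN))/(d(d+1))`).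
The random variable `S = D·Tr((|φ⟩⟨φ| ⊗ |ψ⟩⟨ψ|)ξ)` then satisfies
`E[S²] = (d_A d_B/((d_A+1)(d_B+1)))·(Tr ξ² + Tr ξ_A² + Tr ξ_B²)` for traceless
Hermitian `ξ`. -/
theorem isotropic_product_second_moment {dA dB : ℕ} (hdA : 0 < dA) (hdB : 0 < dB)
    {ΩA ΩB : Type*} [MeasurableSpace ΩA] [MeasurableSpace ΩB]
    (μA : Measure ΩA) (μB : Measure ΩB)
    [IsProbabilityMeasure μA] [IsProbabilityMeasure μB]
    (φ : ΩA → Fin dA → ℂ) (ψ : ΩB → Fin dB → ℂ)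
    (hφm : Measurable φ) (hψm : Measurable ψ)
    (hφunit : ∀ ω, ∑ i, (starRingEnd ℂ) (φ ω i) * φ ω i = 1)
    (hψunit : ∀ ω, ∑ i, (starRingEnd ℂ) (ψ ω i) * ψ ω i = 1)
    (hφhaar : ∀ M N : Matrix (Fin dA) (Fin dA) ℂ,
      ∫ ω, (proj (φ ω) * M).trace * (proj (φ ω) * N).trace ∂μA
        = (M.trace * N.trace + (M * N).trace) / ((dA : ℂ) * (dA + 1)))
    (hψhaar : ∀ M N : Matrix (Fin dB) (Fin dB) ℂ,
      ∫ ω, (proj (ψ ω) * M).trace * (proj (ψ ω) * N).trace ∂μB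
        = (M.trace * N.trace + (M * N).trace) / ((dB : ℂ) * (dB + 1)))
    (ξ : Matrix (Fin dA × Fin dB) (Fin dA × Fin dB) ℂ)
    (hξ : ξ.IsHermitian) (hξ0 : ξ.trace = 0) :
    ∫ ω, (((dA * dB : ℕ) : ℂ)
        * (((proj (φ ω.1) ⊗ₖ proj (ψ ω.2)) * ξ).trace)) ^ 2 ∂(μA.prod μB)
      = (((dA : ℂ) * dB) / ((dA + 1) * (dB + 1)))
        * ((ξ * ξ).trace + (ptraceB ξ * ptraceB ξ).trace
            + (ptraceA ξ * ptraceA ξ).trace) := by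
  classical
  set c : ℂ := ((dA * dB : ℕ) : ℂ) with hc
  set EA : Fin dA × Fin dA → Matrix (Fin dA) (Fin dA) ℂ :=
    fun p => Matrix.single p.2 p.1 (1:ℂ) with hEA
  -- pointwise expansion of the integrand
  have hpt : ∀ ω : ΩA × ΩB,
      (c * (((proj (φ ω.1) ⊗ₖ proj (ψ ω.2)) * ξ).trace)) ^ 2
        = ∑ p : Fin dA × Fin dA, ∑ q : Fin dA × Fin dA,
            ((c ^ 2 * ((proj (φ ω.1) * EA p).trace * (proj (φ ω.1) * EA q).trace))
              * ((proj (ψ ω.2) * Bmat ξ p).trace * (proj (ψ ω.2) * Bmat ξ q).trace)) := by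
    intro ω
    rw [trace_kron]
    have hsq : (c * ∑ p : Fin dA × Fin dA,
          proj (φ ω.1) p.1 p.2 * (proj (ψ ω.2) * Bmat ξ p).trace) ^ 2
        = c ^ 2 * ((∑ p : Fin dA × Fin dA,
              proj (φ ω.1) p.1 p.2 * (proj (ψ ω.2) * Bmat ξ p).trace)
            * (∑ q : Fin dA × Fin dA,
              proj (φ ω.1) q.1 q.2 * (proj (ψ ω.2) * Bmat ξ q).trace)) := by ring
    rw [hsq, Finset.sum_mul_sum, Finset.mul_sum]
    refine Finset.sum_congr rfl fun p _ => ?_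
    rw [Finset.mul_sum]
    refine Finset.sum_congr rfl fun q _ => ?_
    rw [hEA]
    rw [← proj_entry_trace, ← proj_entry_trace]
    ring
  -- integrability of the individual terms
  have hint : ∀ p q : Fin dA × Fin dA,
      Integrable (fun ω : ΩA × ΩB =>
        (c ^ 2 * ((proj (φ ω.1) * EA p).trace * (proj (φ ω.1) * EA q).trace))
          * ((proj (ψ ω.2) * Bmat ξ p).trace * (proj (ψ ω.2) * Bmat ξ q).trace))
        (μA.prod μB) := fun p q =>
    ((integrable_trace_mul μA φ hφm hφunit (EA p) (EA q)).const_mul (c ^ 2)).mul_prod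
      (integrable_trace_mul μB ψ hψm hψunit (Bmat ξ p) (Bmat ξ q))
  -- compute the integral
  have hI : ∫ ω, (c * (((proj (φ ω.1) ⊗ₖ proj (ψ ω.2)) * ξ).trace)) ^ 2 ∂(μA.prod μB)
      = ∑ p : Fin dA × Fin dA, ∑ q : Fin dA × Fin dA,
          (c ^ 2 * (((EA p).trace * (EA q).trace + (EA p * EA q).trace)
              / ((dA : ℂ) * (dA + 1))))
            * (((Bmat ξ p).trace * (Bmat ξ q).trace + (Bmat ξ p * Bmat ξ q).trace)
              / ((dB : ℂ) * (dB + 1))) := by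
    rw [integral_congr_ae (Filter.Eventually.of_forall hpt)]
    rw [integral_finset_sum _ fun p _ => integrable_finset_sum _ fun q _ => hint p q]
    refine Finset.sum_congr rfl fun p _ => ?_
    rw [integral_finset_sum _ fun q _ => hint p q]
    refine Finset.sum_congr rfl fun q _ => ?_
    rw [integral_prod_mul (f := fun ω1 =>
          c ^ 2 * ((proj (φ ω1) * EA p).trace * (proj (φ ω1) * EA q).trace))
        (g := fun ω2 => (proj (ψ ω2) * Bmat ξ p).trace * (proj (ψ ω2) * Bmat ξ q).trace)]
    rw [integral_const_mul, hφhaar, hψhaar]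
  rw [hI]
  -- rewrite the Haar coefficient using the explicit delta form
  have hcoeff : ∀ p q : Fin dA × Fin dA,
      (c ^ 2 * (((EA p).trace * (EA q).trace + (EA p * EA q).trace)
          / ((dA : ℂ) * (dA + 1))))
        * (((Bmat ξ p).trace * (Bmat ξ q).trace + (Bmat ξ p * Bmat ξ q).trace)
          / ((dB : ℂ) * (dB + 1)))
      = (c ^ 2 * ((((dA : ℂ) * (dA + 1)) * ((dB : ℂ) * (dB + 1)))⁻¹))
        * (((if p.1 = p.2 then 1 else 0) * (if q.1 = q.2 then 1 else 0)
              + (if q = (p.2, p.1) then 1 else 0))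
            * ((Bmat ξ p).trace * (Bmat ξ q).trace + (Bmat ξ p * Bmat ξ q).trace)) := by
    intro p q
    rw [hEA]
    rw [coeff p q]
    simp only [div_eq_mul_inv, mul_inv]
    ring
  simp only [hcoeff, ← Finset.mul_sum]
  -- evaluate the combinatorial sum
  have E1 : ∑ p : Fin dA × Fin dA, ∑ q : Fin dA × Fin dA,
      ((if p.1 = p.2 then (1:ℂ) else 0) * (Bmat ξ p).trace)
        * ((if q.1 = q.2 then 1 else 0) * (Bmat ξ q).trace) = 0 := by
    rw [← Finset.sum_mul_sum, sum_delta_traceB, hξ0, zero_mul]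
  have E3 : ∑ p : Fin dA × Fin dA, ∑ q : Fin dA × Fin dA,
      (if q = (p.2, p.1) then (1:ℂ) else 0) * ((Bmat ξ p).trace * (Bmat ξ q).trace)
      = (ptraceB ξ * ptraceB ξ).trace := by
    simp only [ite_mul, one_mul, zero_mul, Finset.sum_ite_eq', Finset.mem_univ, if_true]
    exact sum_S3 ξ
  have E4 : ∑ p : Fin dA × Fin dA, ∑ q : Fin dA × Fin dA,
      (if q = (p.2, p.1) then (1:ℂ) else 0) * (Bmat ξ p * Bmat ξ q).trace
      = (ξ * ξ).trace := by
    simp only [ite_mul, one_mul, zero_mul, Finset.sum_ite_eq', Finset.mem_univ, if_true]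
    exact sum_S4 ξ
  have expand : ∀ p q : Fin dA × Fin dA,
      ((if p.1 = p.2 then (1:ℂ) else 0) * (if q.1 = q.2 then 1 else 0)
          + (if q = (p.2, p.1) then 1 else 0))
        * ((Bmat ξ p).trace * (Bmat ξ q).trace + (Bmat ξ p * Bmat ξ q).trace)
      = ((if p.1 = p.2 then (1:ℂ) else 0) * (Bmat ξ p).trace)
            * ((if q.1 = q.2 then 1 else 0) * (Bmat ξ q).trace)
        + ((if p.1 = p.2 then (1:ℂ) else 0) * (if q.1 = q.2 then 1 else 0))
            * (Bmat ξ p * Bmat ξ q).trace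
        + (if q = (p.2, p.1) then (1:ℂ) else 0)
            * ((Bmat ξ p).trace * (Bmat ξ q).trace)
        + (if q = (p.2, p.1) then (1:ℂ) else 0) * (Bmat ξ p * Bmat ξ q).trace := by
    intro p q; ring
  have key : ∑ p : Fin dA × Fin dA, ∑ q : Fin dA × Fin dA,
      (((if p.1 = p.2 then (1:ℂ) else 0) * (if q.1 = q.2 then 1 else 0)
          + (if q = (p.2, p.1) then 1 else 0))
        * ((Bmat ξ p).trace * (Bmat ξ q).trace + (Bmat ξ p * Bmat ξ q).trace))
      = (ξ * ξ).trace + (ptraceB ξ * ptraceB ξ).trace + (ptraceA ξ * ptraceA ξ).trace := by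
    simp only [expand, Finset.sum_add_distrib]
    rw [E1, E3, E4, sum_S2 ξ]
    ring
  rw [key]
  -- final arithmetic
  have hA0 : (dA : ℂ) ≠ 0 := Nat.cast_ne_zero.mpr hdA.ne'
  have hB0 : (dB : ℂ) ≠ 0 := Nat.cast_ne_zero.mpr hdB.ne'
  have hA1 : (dA : ℂ) + 1 ≠ 0 := by
    have : ((dA + 1 : ℕ) : ℂ) ≠ 0 := Nat.cast_ne_zero.mpr (Nat.succ_ne_zero dA)
    push_cast at this; exact this
  have hB1 : (dB : ℂ) + 1 ≠ 0 := by
    have : ((dB + 1 : ℕ) : ℂ) ≠ 0 := Nat.cast_ne_zero.mpr (Nat.succ_ne_zero dB)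
    push_cast at this; exact this
  rw [hc]
  push_cast
  field_simp
end
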